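/- arXiv:1803.09345 — 6 statements merged into one kernel-verified Lean document; each statement's English description precedes it below -/
import Mathlib

section
/- Let 0 < g₀ ≤ g₁ ≤ 2g₀, a ∈ [g₀, g₁], 0 < s < 1, and let φ : (0,a) → ℝ be measurable. Then ∫_a^{g₁} ∫₀^{a} |φ(2a − y₁) − φ(y₂)|² / |y₁ − y₂|^{1+2s} dy₂ dy₁ ≤ 3^{1+2s} ∫₀^{a} ∫₀^{a} |φ(z₁) − φ(y₂)|² / |z₁ − y₂|^{1+2s} dy₂ dz₁. (The key pointwise fact is that for y₁ ∈ (a, g₁) and y₂ ∈ (0, a), setting z₁ = 2a − y₁ ∈ (0,a), one has |z₁ − y₂| ≤ 3|y₁ − y₂|.) -/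
open MeasureTheory Set ENNReal

private lemma ptwise_div_bound {d r q p : ℝ} (hp : 0 < p) (hr : 0 < r)
    (hq : q ≤ 3 * r) (hq0 : 0 ≤ q) (hd : q = 0 → d = 0) :
    d ^ 2 / r ^ p ≤ 3 ^ p * (d ^ 2 / q ^ p) := by
  rcases eq_or_lt_of_le hq0 with h0 | h0
  · rw [hd h0.symm]
    simp
  · have h1 : q ^ p ≤ (3 * r) ^ p :=
      Real.rpow_le_rpow (le_of_lt h0) hq (le_of_lt hp)
    have h2 : (3 * r) ^ p = 3 ^ p * r ^ p := Real.mul_rpow (by norm_num) hr.le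
    have hrp : (0 : ℝ) < r ^ p := Real.rpow_pos_of_pos hr p
    have hqp : (0 : ℝ) < q ^ p := Real.rpow_pos_of_pos h0 p
    rw [div_le_iff₀ hrp, mul_comm (3 ^ p), mul_assoc, div_mul_eq_mul_div,
      le_div_iff₀ hqp, mul_comm (d ^ 2)]
    calc q ^ p * d ^ 2 ≤ (3 ^ p * r ^ p) * d ^ 2 := by
          nlinarith [sq_nonneg d, h1, h2]
      _ = d ^ 2 * (3 ^ p * r ^ p) := by ring

/-- Let `0 < g₀ ≤ g₁ ≤ 2g₀`, `a ∈ [g₀, g₁]`, `0 < s < 1` and `φ` measurable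
on `(0,a)`. Then the mixed Gagliardo double integral of the reflected function over
`(a,g₁) × (0,a)` is bounded by `3^{1+2s}` times the Gagliardo seminorm (squared) of `φ`
over `(0,a)²`; the key pointwise fact is that `|2a - y₁ - y₂| ≤ 3 |y₁ - y₂|` there. -/
theorem reflection_gagliardo_B (g₀ g₁ a s : ℝ) (hg₀ : 0 < g₀) (hg₀₁ : g₀ ≤ g₁)
    (hg₁ : g₁ ≤ 2 * g₀) (ha : a ∈ Icc g₀ g₁) (hs : s ∈ Ioo (0 : ℝ) 1)
    (φ : ℝ → ℝ) (hφ : Measurable φ) :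
    (∀ y₁ ∈ Ioo a g₁, ∀ y₂ ∈ Ioo (0 : ℝ) a,
        2 * a - y₁ ∈ Ioo (0 : ℝ) a ∧ |(2 * a - y₁) - y₂| ≤ 3 * |y₁ - y₂|) ∧
    ∫⁻ y₁ in Ioo a g₁, ∫⁻ y₂ in Ioo (0 : ℝ) a,
        ENNReal.ofReal ((φ (2 * a - y₁) - φ y₂) ^ 2 / |y₁ - y₂| ^ (1 + 2 * s))
      ≤ ENNReal.ofReal (3 ^ (1 + 2 * s)) *
        ∫⁻ z₁ in Ioo (0 : ℝ) a, ∫⁻ y₂ in Ioo (0 : ℝ) a,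
          ENNReal.ofReal ((φ z₁ - φ y₂) ^ 2 / |z₁ - y₂| ^ (1 + 2 * s)) := by
  obtain ⟨ha₀, ha₁⟩ := ha
  obtain ⟨hs₀, hs₁⟩ := hs
  have hp : (0:ℝ) < 1 + 2 * s := by linarith
  have key : ∀ y₁ ∈ Ioo a g₁, ∀ y₂ ∈ Ioo (0 : ℝ) a,
      2 * a - y₁ ∈ Ioo (0 : ℝ) a ∧ |(2 * a - y₁) - y₂| ≤ 3 * |y₁ - y₂| := by
    rintro y₁ ⟨h1, h2⟩ y₂ ⟨h3, h4⟩
    have habs : |y₁ - y₂| = y₁ - y₂ := abs_of_pos (by linarith)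
    refine ⟨⟨by linarith, by linarith⟩, ?_⟩
    rw [habs, abs_le]
    constructor <;> linarith
  refine ⟨key, ?_⟩
  set p := 1 + 2 * s with hpdef
  set F : ℝ → ℝ≥0∞ := fun z =>
    ∫⁻ y₂ in Ioo (0 : ℝ) a, ENNReal.ofReal ((φ z - φ y₂) ^ 2 / |z - y₂| ^ p) with hF
  have hFmeas : Measurable F := by
    rw [hF]
    exact Measurable.lintegral_prod_right (f := fun z y₂ =>
      ENNReal.ofReal ((φ z - φ y₂) ^ 2 / |z - y₂| ^ p)) (by fun_prop)
  -- step 1: pointwise bound gives inner-integral bound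
  have step1 : ∀ y₁ ∈ Ioo a g₁,
      (∫⁻ y₂ in Ioo (0 : ℝ) a,
          ENNReal.ofReal ((φ (2 * a - y₁) - φ y₂) ^ 2 / |y₁ - y₂| ^ p))
        ≤ ENNReal.ofReal (3 ^ p) * F (2 * a - y₁) := by
    intro y₁ hy₁
    rw [hF, ← lintegral_const_mul' _ _ ENNReal.ofReal_ne_top]
    refine setLIntegral_mono_ae (by fun_prop) ?_
    filter_upwards with y₂ hy₂
    obtain ⟨hz, habs⟩ := key y₁ hy₁ y₂ hy₂
    obtain ⟨h1, h2⟩ := hy₁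
    obtain ⟨h3, h4⟩ := hy₂
    have hr : (0:ℝ) < |y₁ - y₂| := abs_pos.mpr (by intro h; linarith [sub_eq_zero.mp h])
    have hd : |(2 * a - y₁) - y₂| = 0 → φ (2 * a - y₁) - φ y₂ = 0 := by
      intro h
      have : 2 * a - y₁ = y₂ := by
        have := abs_eq_zero.mp h; linarith [sub_eq_zero.mp this]
      rw [this, sub_self]
    calc ENNReal.ofReal ((φ (2 * a - y₁) - φ y₂) ^ 2 / |y₁ - y₂| ^ p)
        ≤ ENNReal.ofReal (3 ^ p *
            ((φ (2 * a - y₁) - φ y₂) ^ 2 / |(2 * a - y₁) - y₂| ^ p)) :=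
          ENNReal.ofReal_le_ofReal
            (ptwise_div_bound hp hr habs (abs_nonneg _) hd)
      _ = ENNReal.ofReal (3 ^ p) *
            ENNReal.ofReal ((φ (2 * a - y₁) - φ y₂) ^ 2 / |(2 * a - y₁) - y₂| ^ p) := by
          rw [ENNReal.ofReal_mul (by positivity)]
  -- step 2: integrate step1 over y₁
  have step2 : ∫⁻ y₁ in Ioo a g₁, ∫⁻ y₂ in Ioo (0 : ℝ) a,
        ENNReal.ofReal ((φ (2 * a - y₁) - φ y₂) ^ 2 / |y₁ - y₂| ^ p)
      ≤ ENNReal.ofReal (3 ^ p) * ∫⁻ y₁ in Ioo a g₁, F (2 * a - y₁) := by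
    rw [← lintegral_const_mul' _ _ ENNReal.ofReal_ne_top]
    exact setLIntegral_mono_ae (by fun_prop) (Filter.Eventually.of_forall step1)
  -- step 3: change of variables z = 2a - y₁
  have hmp : MeasurePreserving (fun x : ℝ => 2 * a - x) volume volume :=
    Measure.measurePreserving_sub_left volume (2 * a)
  have hemb : MeasurableEmbedding (fun x : ℝ => 2 * a - x) :=
    (MeasurableEquiv.subLeft (2 * a)).measurableEmbedding
  have hpre : (fun x : ℝ => 2 * a - x) ⁻¹' Ioo (2 * a - g₁) a = Ioo a g₁ := by
    ext x
    simp only [mem_preimage, mem_Ioo]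
    constructor <;> rintro ⟨u, v⟩ <;> constructor <;> linarith
  have step3 : ∫⁻ y₁ in Ioo a g₁, F (2 * a - y₁)
      = ∫⁻ z in Ioo (2 * a - g₁) a, F z := by
    rw [← hpre]
    exact hmp.setLIntegral_comp_preimage_emb hemb F _
  have step4 : ∫⁻ z in Ioo (2 * a - g₁) a, F z ≤ ∫⁻ z in Ioo (0:ℝ) a, F z :=
    lintegral_mono_set (fun x hx => ⟨by linarith [hx.1], hx.2⟩)
  calc ∫⁻ y₁ in Ioo a g₁, ∫⁻ y₂ in Ioo (0 : ℝ) a,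
        ENNReal.ofReal ((φ (2 * a - y₁) - φ y₂) ^ 2 / |y₁ - y₂| ^ p)
      ≤ ENNReal.ofReal (3 ^ p) * ∫⁻ y₁ in Ioo a g₁, F (2 * a - y₁) := step2
    _ = ENNReal.ofReal (3 ^ p) * ∫⁻ z in Ioo (2 * a - g₁) a, F z := by rw [step3]
    _ ≤ ENNReal.ofReal (3 ^ p) * ∫⁻ z in Ioo (0:ℝ) a, F z :=
        mul_le_mul_right step4 _
end

section
/- Let 0 < g₀ ≤ g₁ ≤ 2g₀ and 0 < s < 1. There exists a constant C > 0, depending only on s (in particular independent of a), such that for every a ∈ [g₀, g₁] and every measurable φ : (0,a) → ℝ with ‖φ‖²_{H^s(0,a)} := ∫₀^a |φ|² + [φ]²_{s,(0,a)} < ∞, the reflection extension Pφ to (0,g₁) satisfies ∫₀^{g₁} |Pφ|² + [Pφ]²_{s,(0,g₁)} ≤ C ( ∫₀^{a} |φ|² + [φ]²_{s,(0,a)} ). -/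
open MeasureTheory Set

private lemma refl_lintegral (c : ℝ) (g : ℝ → ENNReal) (s : Set ℝ) :
    ∫⁻ x in (fun y : ℝ => c - y) ⁻¹' s, g (c - x) = ∫⁻ y in s, g y :=
  (Measure.measurePreserving_sub_left volume c).setLIntegral_comp_preimage_emb
    (Homeomorph.subLeft c).measurableEmbedding g s

private lemma pt_bound {p : ℝ} (hp : 0 ≤ p) (u d D : ℝ) (hdD : |d| ≤ |D|) (hu : d = 0 → u = 0) :
    ENNReal.ofReal (u ^ 2 / |D| ^ p) ≤ ENNReal.ofReal (u ^ 2 / |d| ^ p) := by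
  rcases eq_or_ne d 0 with h | h
  · simp [hu h]
  · have h1 : (0:ℝ) < |d| := abs_pos.2 h
    apply ENNReal.ofReal_le_ofReal
    apply div_le_div_of_nonneg_left (by positivity) (Real.rpow_pos_of_pos h1 p)
    exact Real.rpow_le_rpow h1.le hdD hp

private lemma main_aux (p : ℝ) (hp0 : 0 ≤ p) (a g₁ : ℝ) (ha0 : 0 < a) (hag : a ≤ g₁)
    (h2a : 0 ≤ 2 * a - g₁) (φ ψ : ℝ → ℝ) (hφ : Measurable φ)
    (hψdef : ∀ y, ψ y = if y < a then φ y else φ (2 * a - y)) :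
    (∫⁻ y in Ioo (0 : ℝ) g₁, ENNReal.ofReal (ψ y ^ 2)) +
      (∫⁻ x in Ioo (0 : ℝ) g₁, ∫⁻ y in Ioo (0 : ℝ) g₁,
        ENNReal.ofReal ((ψ x - ψ y) ^ 2 / |x - y| ^ p))
    ≤ 4 * ((∫⁻ y in Ioo (0 : ℝ) a, ENNReal.ofReal ((φ y) ^ 2)) +
        (∫⁻ x in Ioo (0 : ℝ) a, ∫⁻ y in Ioo (0 : ℝ) a,
          ENNReal.ofReal ((φ x - φ y) ^ 2 / |x - y| ^ p))) := by
  have hψa : ∀ y : ℝ, y ≤ a → ψ y = φ y := by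
    intro y hy
    rcases hy.lt_or_eq with h | h
    · rw [hψdef, if_pos h]
    · subst h
      rw [hψdef, if_neg (lt_irrefl _), show 2 * y - y = y by ring]
  have hψb : ∀ y : ℝ, a ≤ y → ψ y = φ (2 * a - y) := fun y hy => by
    rw [hψdef, if_neg (not_lt.2 hy)]
  have hψm : Measurable ψ := by
    have : ψ = fun y => if y < a then φ y else φ (2 * a - y) := funext hψdef
    rw [this]
    exact Measurable.ite (measurableSet_lt measurable_id measurable_const) hφ
      (hφ.comp (measurable_const.sub measurable_id))
  have hsplit : Ioo (0:ℝ) g₁ = Ioo 0 a ∪ Ico a g₁ := (Ioo_union_Ico_eq_Ioo ha0 hag).symm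
  have hdisj : Disjoint (Ioo (0:ℝ) a) (Ico a g₁) :=
    disjoint_left.2 fun y hy hy' => absurd hy.2 (not_lt.2 hy'.1)
  have hpre : (fun y : ℝ => 2 * a - y) ⁻¹' Ioc (2 * a - g₁) a = Ico a g₁ := by
    ext y
    simp only [mem_preimage, mem_Ioc, mem_Ico]
    constructor
    · rintro ⟨h1, h2⟩; exact ⟨by linarith, by linarith⟩
    · rintro ⟨h1, h2⟩; exact ⟨by linarith, by linarith⟩
  have hrc : (volume : Measure ℝ).restrict (Ioc 0 a) = volume.restrict (Ioo 0 a) :=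
    (Measure.restrict_congr_set Ioo_ae_eq_Ioc).symm
  have hpreM : MeasurableSet ((fun y : ℝ => 2 * a - y) ⁻¹' Ioc (2 * a - g₁) a) :=
    hpre ▸ (measurableSet_Ico : MeasurableSet (Ico a g₁))
  -- measurability helpers
  have mrpow : Measurable fun q : ℝ × ℝ => |q.1 - q.2| ^ p :=
    (Real.continuous_rpow_const hp0).measurable.comp ((measurable_fst.sub measurable_snd).abs)
  have mKφ : Measurable fun q : ℝ × ℝ => ENNReal.ofReal ((φ q.1 - φ q.2) ^ 2 / |q.1 - q.2| ^ p) :=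
    ENNReal.measurable_ofReal.comp
      ((((hφ.comp measurable_fst).sub (hφ.comp measurable_snd)).pow_const 2).div mrpow)
  have mKψ : Measurable fun q : ℝ × ℝ => ENNReal.ofReal ((ψ q.1 - ψ q.2) ^ 2 / |q.1 - q.2| ^ p) :=
    ENNReal.measurable_ofReal.comp
      ((((hψm.comp measurable_fst).sub (hψm.comp measurable_snd)).pow_const 2).div mrpow)
  have mIφ : Measurable fun x : ℝ =>
      ∫⁻ y in Ioo (0:ℝ) a, ENNReal.ofReal ((φ x - φ y) ^ 2 / |x - y| ^ p) :=
    mKφ.lintegral_prod_right'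
  have mIψA : Measurable fun x : ℝ =>
      ∫⁻ y in Ioo (0:ℝ) a, ENNReal.ofReal ((ψ x - ψ y) ^ 2 / |x - y| ^ p) :=
    mKψ.lintegral_prod_right'
  set L := ∫⁻ y in Ioo (0:ℝ) a, ENNReal.ofReal ((φ y) ^ 2) with hL
  set S := ∫⁻ x in Ioo (0:ℝ) a, ∫⁻ y in Ioo (0:ℝ) a,
      ENNReal.ofReal ((φ x - φ y) ^ 2 / |x - y| ^ p) with hS
  -- L² part
  have hL2 : (∫⁻ y in Ioo (0:ℝ) g₁, ENNReal.ofReal (ψ y ^ 2)) ≤ L + L := by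
    rw [hsplit, lintegral_union measurableSet_Ico hdisj]
    refine add_le_add ?_ ?_
    · apply le_of_eq
      apply setLIntegral_congr_fun measurableSet_Ioo
      exact fun y hy => by rw [hψa y hy.2.le]
    · have e1 : (∫⁻ y in Ico a g₁, ENNReal.ofReal (ψ y ^ 2))
          = ∫⁻ y in Ico a g₁, ENNReal.ofReal ((φ (2 * a - y)) ^ 2) :=
        setLIntegral_congr_fun measurableSet_Ico
          (fun y hy => by rw [hψb y hy.1])
      have e2 := refl_lintegral (2 * a) (fun z => ENNReal.ofReal ((φ z) ^ 2))
        (Ioc (2 * a - g₁) a)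
      rw [hpre] at e2
      calc (∫⁻ y in Ico a g₁, ENNReal.ofReal (ψ y ^ 2))
          = ∫⁻ z in Ioc (2 * a - g₁) a, ENNReal.ofReal ((φ z) ^ 2) := by rw [e1, ← e2]
        _ ≤ ∫⁻ z in Ioc 0 a, ENNReal.ofReal ((φ z) ^ 2) :=
            lintegral_mono_set (Ioc_subset_Ioc_left h2a)
        _ = L := by rw [hrc]
  -- seminorm part: split into four pieces
  have hsem : (∫⁻ x in Ioo (0:ℝ) g₁, ∫⁻ y in Ioo (0:ℝ) g₁,
        ENNReal.ofReal ((ψ x - ψ y) ^ 2 / |x - y| ^ p))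
      = ((∫⁻ x in Ioo (0:ℝ) a, ∫⁻ y in Ioo (0:ℝ) a,
            ENNReal.ofReal ((ψ x - ψ y) ^ 2 / |x - y| ^ p)) +
          (∫⁻ x in Ioo (0:ℝ) a, ∫⁻ y in Ico a g₁,
            ENNReal.ofReal ((ψ x - ψ y) ^ 2 / |x - y| ^ p)))
        + ((∫⁻ x in Ico a g₁, ∫⁻ y in Ioo (0:ℝ) a,
            ENNReal.ofReal ((ψ x - ψ y) ^ 2 / |x - y| ^ p)) +
          (∫⁻ x in Ico a g₁, ∫⁻ y in Ico a g₁,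
            ENNReal.ofReal ((ψ x - ψ y) ^ 2 / |x - y| ^ p))) := by
    rw [hsplit]
    simp only [lintegral_union measurableSet_Ico hdisj]
    rw [lintegral_add_left mIψA, lintegral_add_left mIψA]
  -- T11
  have hT11 : (∫⁻ x in Ioo (0:ℝ) a, ∫⁻ y in Ioo (0:ℝ) a,
      ENNReal.ofReal ((ψ x - ψ y) ^ 2 / |x - y| ^ p)) = S := by
    apply setLIntegral_congr_fun measurableSet_Ioo
    refine fun x hx => ?_
    apply setLIntegral_congr_fun measurableSet_Ioo
    exact fun y hy => by rw [hψa x hx.2.le, hψa y hy.2.le]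
  -- T12
  have hT12 : (∫⁻ x in Ioo (0:ℝ) a, ∫⁻ y in Ico a g₁,
      ENNReal.ofReal ((ψ x - ψ y) ^ 2 / |x - y| ^ p)) ≤ S := by
    rw [hS]
    apply setLIntegral_mono mIφ
    intro x hx
    have hxa : x ≤ a := hx.2.le
    have e1 : (∫⁻ y in Ico a g₁, ENNReal.ofReal ((ψ x - ψ y) ^ 2 / |x - y| ^ p))
        = ∫⁻ z in Ioc (2 * a - g₁) a,
            ENNReal.ofReal ((φ x - φ z) ^ 2 / |x - (2 * a - z)| ^ p) := by
      have h := refl_lintegral (2 * a)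
        (fun z => ENNReal.ofReal ((φ x - φ z) ^ 2 / |x - (2 * a - z)| ^ p))
        (Ioc (2 * a - g₁) a)
      rw [hpre] at h
      rw [← h]
      apply setLIntegral_congr_fun measurableSet_Ico
      refine fun y hy => ?_
      beta_reduce
      rw [hψa x hxa, hψb y hy.1]
      simp only [show 2 * a - (2 * a - y) = y from by ring]
    rw [e1]
    calc (∫⁻ z in Ioc (2 * a - g₁) a,
          ENNReal.ofReal ((φ x - φ z) ^ 2 / |x - (2 * a - z)| ^ p))
        ≤ ∫⁻ z in Ioc (2 * a - g₁) a,
            ENNReal.ofReal ((φ x - φ z) ^ 2 / |x - z| ^ p) := by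
          apply setLIntegral_mono
          · exact ENNReal.measurable_ofReal.comp
              (((measurable_const.sub hφ).pow_const 2).div
                ((Real.continuous_rpow_const hp0).measurable.comp
                  ((measurable_const.sub measurable_id).abs)))
          · intro z hz
            apply pt_bound hp0
            · rw [abs_of_nonpos (by linarith [hz.2] : x - (2 * a - z) ≤ 0)]
              exact abs_le.2 ⟨by linarith [hz.2], by linarith [hz.2]⟩
            · intro h
              rw [sub_eq_zero] at h
              rw [h, sub_self]
      _ ≤ ∫⁻ z in Ioc 0 a, ENNReal.ofReal ((φ x - φ z) ^ 2 / |x - z| ^ p) :=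
          lintegral_mono_set (Ioc_subset_Ioc_left h2a)
      _ = ∫⁻ z in Ioo 0 a, ENNReal.ofReal ((φ x - φ z) ^ 2 / |x - z| ^ p) := by rw [hrc]
  -- T21
  have hT21 : (∫⁻ x in Ico a g₁, ∫⁻ y in Ioo (0:ℝ) a,
      ENNReal.ofReal ((ψ x - ψ y) ^ 2 / |x - y| ^ p)) ≤ S := by
    have e1 : (∫⁻ x in Ico a g₁, ∫⁻ y in Ioo (0:ℝ) a,
        ENNReal.ofReal ((ψ x - ψ y) ^ 2 / |x - y| ^ p))
        = ∫⁻ w in Ioc (2 * a - g₁) a, ∫⁻ y in Ioo (0:ℝ) a,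
            ENNReal.ofReal ((φ w - φ y) ^ 2 / |(2 * a - w) - y| ^ p) := by
      have h := refl_lintegral (2 * a)
        (fun w => ∫⁻ y in Ioo (0:ℝ) a,
          ENNReal.ofReal ((φ w - φ y) ^ 2 / |(2 * a - w) - y| ^ p))
        (Ioc (2 * a - g₁) a)
      rw [hpre] at h
      rw [← h]
      apply setLIntegral_congr_fun measurableSet_Ico
      refine fun x hx => ?_
      show _ = ∫⁻ y in Ioo (0:ℝ) a,
        ENNReal.ofReal ((φ (2 * a - x) - φ y) ^ 2 / |(2 * a - (2 * a - x)) - y| ^ p)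
      apply setLIntegral_congr_fun measurableSet_Ioo
      refine fun y hy => ?_
      beta_reduce
      rw [hψb x hx.1, hψa y hy.2.le]
      simp only [show 2 * a - (2 * a - x) = x from by ring]
    rw [e1, hS]
    calc (∫⁻ w in Ioc (2 * a - g₁) a, ∫⁻ y in Ioo (0:ℝ) a,
          ENNReal.ofReal ((φ w - φ y) ^ 2 / |(2 * a - w) - y| ^ p))
        ≤ ∫⁻ w in Ioc (2 * a - g₁) a, ∫⁻ y in Ioo (0:ℝ) a,
            ENNReal.ofReal ((φ w - φ y) ^ 2 / |w - y| ^ p) := by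
          apply setLIntegral_mono mIφ
          intro w hw
          apply setLIntegral_mono
          · exact ENNReal.measurable_ofReal.comp
              (((measurable_const.sub hφ).pow_const 2).div
                ((Real.continuous_rpow_const hp0).measurable.comp
                  ((measurable_const.sub measurable_id).abs)))
          · intro y hy
            apply pt_bound hp0
            · rw [abs_of_nonneg (by linarith [hw.2, hy.2] : (0:ℝ) ≤ (2 * a - w) - y)]
              exact abs_le.2 ⟨by linarith [hw.2, hy.2], by linarith [hw.2, hy.2]⟩
            · intro h
              rw [sub_eq_zero] at h
              rw [h, sub_self]
      _ ≤ ∫⁻ w in Ioc 0 a, ∫⁻ y in Ioo (0:ℝ) a,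
            ENNReal.ofReal ((φ w - φ y) ^ 2 / |w - y| ^ p) :=
          lintegral_mono_set (Ioc_subset_Ioc_left h2a)
      _ = ∫⁻ w in Ioo 0 a, ∫⁻ y in Ioo (0:ℝ) a,
            ENNReal.ofReal ((φ w - φ y) ^ 2 / |w - y| ^ p) := by rw [hrc]
  -- T22
  have hT22 : (∫⁻ x in Ico a g₁, ∫⁻ y in Ico a g₁,
      ENNReal.ofReal ((ψ x - ψ y) ^ 2 / |x - y| ^ p)) ≤ S := by
    have e1 : (∫⁻ x in Ico a g₁, ∫⁻ y in Ico a g₁,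
        ENNReal.ofReal ((ψ x - ψ y) ^ 2 / |x - y| ^ p))
        = ∫⁻ w in Ioc (2 * a - g₁) a, ∫⁻ y in Ico a g₁,
            ENNReal.ofReal ((φ w - φ (2 * a - y)) ^ 2 / |(2 * a - w) - y| ^ p) := by
      have h := refl_lintegral (2 * a)
        (fun w => ∫⁻ y in Ico a g₁,
          ENNReal.ofReal ((φ w - φ (2 * a - y)) ^ 2 / |(2 * a - w) - y| ^ p))
        (Ioc (2 * a - g₁) a)
      rw [hpre] at h
      rw [← h]
      apply setLIntegral_congr_fun measurableSet_Ico
      refine fun x hx => ?_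
      show _ = ∫⁻ y in Ico a g₁,
        ENNReal.ofReal ((φ (2 * a - x) - φ (2 * a - y)) ^ 2 / |(2 * a - (2 * a - x)) - y| ^ p)
      apply setLIntegral_congr_fun measurableSet_Ico
      refine fun y hy => ?_
      beta_reduce
      rw [hψb x hx.1, hψb y hy.1]
      simp only [show 2 * a - (2 * a - x) = x from by ring]
    have e2 : ∀ w : ℝ, (∫⁻ y in Ico a g₁,
        ENNReal.ofReal ((φ w - φ (2 * a - y)) ^ 2 / |(2 * a - w) - y| ^ p))
        = ∫⁻ z in Ioc (2 * a - g₁) a,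
            ENNReal.ofReal ((φ w - φ z) ^ 2 / |w - z| ^ p) := by
      intro w
      have h := refl_lintegral (2 * a)
        (fun z => ENNReal.ofReal ((φ w - φ z) ^ 2 / |w - z| ^ p))
        (Ioc (2 * a - g₁) a)
      rw [hpre] at h
      rw [← h]
      apply setLIntegral_congr_fun measurableSet_Ico
      refine fun y _ => ?_
      beta_reduce
      show _ = ENNReal.ofReal ((φ w - φ (2 * a - y)) ^ 2 / |w - (2 * a - y)| ^ p)
      rw [show (2 * a - w) - y = -(w - (2 * a - y)) from by ring, abs_neg]
    rw [e1, lintegral_congr e2, hS]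
    calc (∫⁻ w in Ioc (2 * a - g₁) a, ∫⁻ z in Ioc (2 * a - g₁) a,
          ENNReal.ofReal ((φ w - φ z) ^ 2 / |w - z| ^ p))
        ≤ ∫⁻ w in Ioc (2 * a - g₁) a, ∫⁻ z in Ioo 0 a,
            ENNReal.ofReal ((φ w - φ z) ^ 2 / |w - z| ^ p) := by
          apply lintegral_mono
          intro w
          calc (∫⁻ z in Ioc (2 * a - g₁) a,
                ENNReal.ofReal ((φ w - φ z) ^ 2 / |w - z| ^ p))
              ≤ ∫⁻ z in Ioc 0 a, ENNReal.ofReal ((φ w - φ z) ^ 2 / |w - z| ^ p) :=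
                lintegral_mono_set (Ioc_subset_Ioc_left h2a)
            _ = ∫⁻ z in Ioo 0 a, ENNReal.ofReal ((φ w - φ z) ^ 2 / |w - z| ^ p) := by rw [hrc]
      _ ≤ ∫⁻ w in Ioc 0 a, ∫⁻ z in Ioo 0 a,
            ENNReal.ofReal ((φ w - φ z) ^ 2 / |w - z| ^ p) :=
          lintegral_mono_set (Ioc_subset_Ioc_left h2a)
      _ = ∫⁻ w in Ioo 0 a, ∫⁻ z in Ioo 0 a,
            ENNReal.ofReal ((φ w - φ z) ^ 2 / |w - z| ^ p) := by rw [hrc]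
  have hSem : (∫⁻ x in Ioo (0:ℝ) g₁, ∫⁻ y in Ioo (0:ℝ) g₁,
      ENNReal.ofReal ((ψ x - ψ y) ^ 2 / |x - y| ^ p)) ≤ (S + S) + (S + S) := by
    rw [hsem]
    exact add_le_add (add_le_add hT11.le hT12) (add_le_add hT21 hT22)
  calc (∫⁻ y in Ioo (0:ℝ) g₁, ENNReal.ofReal (ψ y ^ 2)) +
      (∫⁻ x in Ioo (0:ℝ) g₁, ∫⁻ y in Ioo (0:ℝ) g₁,
        ENNReal.ofReal ((ψ x - ψ y) ^ 2 / |x - y| ^ p))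
      ≤ (L + L) + ((S + S) + (S + S)) := add_le_add hL2 hSem
    _ ≤ 4 * (L + S) := by
        rw [show (4:ENNReal) * (L + S) = ((L + L) + ((S + S) + (S + S))) + (L + L) from by ring]
        exact le_self_add

/-- For `0 < s < 1` there is a constant `C > 0` depending only on `s`
(in particular independent of `g₀, g₁` and `a`) such that whenever `0 < g₀ ≤ g₁ ≤ 2g₀`,
`a ∈ [g₀, g₁]` and `φ : (0,a) → ℝ` is measurable with finite `H^s(0,a)` norm
(`∫₀^a |φ|² + [φ]²_{s,(0,a)} < ∞`), the reflection extension
`Pφ(y) = φ y` for `y < a`, `Pφ(y) = φ (2a - y)` for `y ≥ a`, satisfies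
`∫₀^{g₁} |Pφ|² + [Pφ]²_{s,(0,g₁)} ≤ C (∫₀^a |φ|² + [φ]²_{s,(0,a)})`. -/
theorem reflection_extension_Hs_bound (s : ℝ) (hs : s ∈ Ioo (0 : ℝ) 1) :
    ∃ C : ℝ, 0 < C ∧
      ∀ g₀ g₁ a : ℝ, 0 < g₀ → g₀ ≤ g₁ → g₁ ≤ 2 * g₀ → a ∈ Icc g₀ g₁ →
      ∀ φ : ℝ → ℝ, Measurable φ →
      (∫⁻ y in Ioo (0 : ℝ) a, ENNReal.ofReal ((φ y) ^ 2)) +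
        (∫⁻ x in Ioo (0 : ℝ) a, ∫⁻ y in Ioo (0 : ℝ) a,
          ENNReal.ofReal ((φ x - φ y) ^ 2 / |x - y| ^ (1 + 2 * s))) < ⊤ →
      (∫⁻ y in Ioo (0 : ℝ) g₁,
          ENNReal.ofReal ((if y < a then φ y else φ (2 * a - y)) ^ 2)) +
        (∫⁻ x in Ioo (0 : ℝ) g₁, ∫⁻ y in Ioo (0 : ℝ) g₁,
          ENNReal.ofReal (((if x < a then φ x else φ (2 * a - x)) -
            (if y < a then φ y else φ (2 * a - y))) ^ 2 / |x - y| ^ (1 + 2 * s)))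
      ≤ ENNReal.ofReal C *
        ((∫⁻ y in Ioo (0 : ℝ) a, ENNReal.ofReal ((φ y) ^ 2)) +
          (∫⁻ x in Ioo (0 : ℝ) a, ∫⁻ y in Ioo (0 : ℝ) a,
            ENNReal.ofReal ((φ x - φ y) ^ 2 / |x - y| ^ (1 + 2 * s)))) := by
  obtain ⟨hs0, _⟩ := hs
  refine ⟨4, by norm_num, ?_⟩
  intro g₀ g₁ a hg0 h01 h12 ha φ hφ _
  have h4 : ENNReal.ofReal (4:ℝ) = 4 := by norm_num
  rw [h4]
  exact main_aux (1 + 2 * s) (by linarith) a g₁ (lt_of_lt_of_le hg0 ha.1) ha.2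
    (by linarith [ha.1]) φ (fun y => if y < a then φ y else φ (2 * a - y)) hφ
    (fun y => rfl)
end

section
/- Let a > 0, 0 < b ≤ a, and let φ₀ ∈ L²(0,a). Define iteratively, for n ≥ 1, functions φₙ on (−nb, a) by φₙ(y) = φₙ₋₁(y) for −(n−1)b < y < a and φₙ(y) = φₙ₋₁(−y − 2(n−1)b) for −nb < y ≤ −(n−1)b. Then each φₙ is well defined (the reflected argument −y − 2(n−1)b lies in the domain of φₙ₋₁) and ∫_{−nb}^{a} |φₙ(y)|² dy ≤ (n+1) ∫₀^{a} |φ₀(y)|² dy. -/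
open MeasureTheory Set
open scoped ENNReal

lemma refl_lintegral_s7 (c l u : ℝ) (g : ℝ → ℝ≥0∞) :
    ∫⁻ y in Ioo l u, g (c - y) = ∫⁻ y in Ioo (c - u) (c - l), g y := by
  have hmp : MeasurePreserving (fun y : ℝ => c - y) volume volume :=
    Measure.measurePreserving_sub_left volume c
  have hemb : MeasurableEmbedding (fun y : ℝ => c - y) :=
    (MeasurableEquiv.subLeft c).measurableEmbedding
  have h := hmp.setLIntegral_comp_preimage_emb hemb g (Ioo (c - u) (c - l))
  have hset : (fun y : ℝ => c - y) ⁻¹' Ioo (c - u) (c - l) = Ioo l u := by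
    ext y
    simp only [mem_preimage, mem_Ioo]
    constructor <;> intro hy <;> exact ⟨by linarith [hy.1, hy.2], by linarith [hy.1, hy.2]⟩
  rw [hset] at h
  exact h

/-- Iterated even reflections: starting from `φ 0 = φ₀ ∈ L²(0,a)` and
`0 < b ≤ a`, the function `φ n` extends `φ (n-1)` from `(-(n-1)b, a)` to `(-nb, a)` by
even reflection about the point `-(n-1)b`. Then each reflection is well defined (the
reflected argument lies in the domain of `φ (n-1)`) and
`∫_{-nb}^a |φ n|² ≤ (n+1) ∫₀^a |φ₀|²`. -/
theorem iterated_reflection_L2_bound (a b : ℝ) (ha : 0 < a) (hb : 0 < b) (hba : b ≤ a)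
    (φ : ℕ → ℝ → ℝ)
    (hφ₀ : MemLp (φ 0) 2 (volume.restrict (Ioo 0 a)))
    (hrec₁ : ∀ n : ℕ, 1 ≤ n → ∀ y : ℝ, -(((n : ℝ) - 1) * b) < y → φ n y = φ (n - 1) y)
    (hrec₂ : ∀ n : ℕ, 1 ≤ n → ∀ y : ℝ, y ≤ -(((n : ℝ) - 1) * b) →
      φ n y = φ (n - 1) (-y - 2 * ((n : ℝ) - 1) * b)) :
    (∀ n : ℕ, 1 ≤ n → ∀ y ∈ Ioo (-((n : ℝ) * b)) (-(((n : ℝ) - 1) * b)),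
        -y - 2 * ((n : ℝ) - 1) * b ∈ Ioo (-(((n : ℝ) - 1) * b)) a) ∧
    ∀ n : ℕ, ∫⁻ y in Ioo (-((n : ℝ) * b)) a, ENNReal.ofReal ((φ n y) ^ 2)
      ≤ ((n : ℝ≥0∞) + 1) * ∫⁻ y in Ioo (0 : ℝ) a, ENNReal.ofReal ((φ 0 y) ^ 2) := by
  constructor
  · intro n hn y hy
    have hn1 : (1 : ℝ) ≤ (n : ℝ) := by exact_mod_cast hn
    obtain ⟨hy1, hy2⟩ := hy
    refine ⟨by linarith, ?_⟩
    nlinarith [mul_nonneg (by linarith : (0:ℝ) ≤ (n:ℝ) - 1) hb.le]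
  · set I : ℕ → ℝ≥0∞ :=
      fun n => ∫⁻ y in Ioo (-((n : ℝ) * b)) a, ENNReal.ofReal ((φ n y) ^ 2) with hIdef
    set J : ℕ → ℝ≥0∞ :=
      fun m => ∫⁻ y in Ioo (-((m : ℝ) * b)) ((1 - (m : ℝ)) * b),
        ENNReal.ofReal ((φ m y) ^ 2) with hJdef
    have hI0 : I 0 = ∫⁻ y in Ioo (0 : ℝ) a, ENNReal.ofReal ((φ 0 y) ^ 2) := by
      simp [hIdef]
    have hJ0 : J 0 ≤ I 0 := by
      simp only [hJdef, hIdef, Nat.cast_zero, neg_zero, zero_mul, sub_zero, one_mul]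
      exact lintegral_mono' (Measure.restrict_mono (Ioo_subset_Ioo le_rfl hba) le_rfl) le_rfl
    have hJstep : ∀ m : ℕ, J (m + 1) = J m := by
      intro m
      have hcast : ((m + 1 : ℕ) : ℝ) - 1 = (m : ℝ) := by push_cast; ring
      have hfun : ∀ y ∈ Ioo (-(((m : ℝ) + 1) * b)) ((1 - ((m : ℝ) + 1)) * b),
          ENNReal.ofReal ((φ (m + 1) y) ^ 2)
            = ENNReal.ofReal ((φ m ((-2 * (m : ℝ) * b) - y)) ^ 2) := by
        intro y hy
        have h2 := hrec₂ (m + 1) (Nat.le_add_left 1 m) y (by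
          rw [hcast]
          nlinarith [hy.2, hb.le])
        rw [hcast] at h2
        simp only [Nat.add_sub_cancel] at h2
        rw [h2]
        ring_nf
      calc J (m + 1)
          = ∫⁻ y in Ioo (-(((m : ℝ) + 1) * b)) ((1 - ((m : ℝ) + 1)) * b),
              ENNReal.ofReal ((φ (m + 1) y) ^ 2) := by
            simp only [hJdef]; push_cast; rfl
        _ = ∫⁻ y in Ioo (-(((m : ℝ) + 1) * b)) ((1 - ((m : ℝ) + 1)) * b),
              ENNReal.ofReal ((φ m ((-2 * (m : ℝ) * b) - y)) ^ 2) := by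
            refine setLIntegral_congr_fun measurableSet_Ioo ?_
            intro y hy
            exact hfun y hy
        _ = ∫⁻ y in Ioo ((-2 * (m : ℝ) * b) - (1 - ((m : ℝ) + 1)) * b)
              ((-2 * (m : ℝ) * b) - (-(((m : ℝ) + 1) * b))),
              ENNReal.ofReal ((φ m y) ^ 2) :=
            refl_lintegral_s7 (-2 * (m : ℝ) * b) (-(((m : ℝ) + 1) * b)) ((1 - ((m : ℝ) + 1)) * b)
              (fun x => ENNReal.ofReal ((φ m x) ^ 2))
        _ = J m := by
            simp only [hJdef]
            congr 1 <;> ring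
    have hJle : ∀ m : ℕ, J m ≤ I 0 := by
      intro m
      induction m with
      | zero => exact hJ0
      | succ k ih => rw [hJstep k]; exact ih
    have hstep : ∀ n : ℕ, I (n + 1) = I n + J n := by
      intro n
      have hcast : ((n + 1 : ℕ) : ℝ) - 1 = (n : ℝ) := by push_cast; ring
      have hlc : -(((n : ℝ) + 1) * b) < -((n : ℝ) * b) := by nlinarith
      have hca : -((n : ℝ) * b) ≤ a := by nlinarith [Nat.cast_nonneg (α := ℝ) n]
      have hsplit : Ioo (-(((n : ℝ) + 1) * b)) a
          = Ioo (-(((n : ℝ) + 1) * b)) (-((n : ℝ) * b)) ∪ Ico (-((n : ℝ) * b)) a :=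
        (Ioo_union_Ico_eq_Ioo hlc hca).symm
      have hdisj : Disjoint (Ioo (-(((n : ℝ) + 1) * b)) (-((n : ℝ) * b)))
          (Ico (-((n : ℝ) * b)) a) :=
        (Iio_disjoint_Ici le_rfl).mono Ioo_subset_Iio_self Ico_subset_Ici_self
      have hmain : I (n + 1)
          = (∫⁻ y in Ioo (-(((n : ℝ) + 1) * b)) (-((n : ℝ) * b)),
              ENNReal.ofReal ((φ (n + 1) y) ^ 2))
            + ∫⁻ y in Ico (-((n : ℝ) * b)) a, ENNReal.ofReal ((φ (n + 1) y) ^ 2) := by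
        simp only [hIdef]
        push_cast
        rw [hsplit, lintegral_union measurableSet_Ico hdisj]
      -- right part equals I n
      have hright : (∫⁻ y in Ico (-((n : ℝ) * b)) a, ENNReal.ofReal ((φ (n + 1) y) ^ 2))
          = I n := by
        have h1 : (∫⁻ y in Ico (-((n : ℝ) * b)) a, ENNReal.ofReal ((φ (n + 1) y) ^ 2))
            = ∫⁻ y in Ico (-((n : ℝ) * b)) a, ENNReal.ofReal ((φ n y) ^ 2) := by
          refine setLIntegral_congr_fun measurableSet_Ico ?_
          intro y hy
          beta_reduce
          rcases eq_or_lt_of_le hy.1 with heq | hlt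
          · have h2 := hrec₂ (n + 1) (Nat.le_add_left 1 n) y (by rw [hcast, ← heq])
            rw [hcast] at h2
            simp only [Nat.add_sub_cancel] at h2
            rw [h2, ← heq]
            ring_nf
          · have h1 := hrec₁ (n + 1) (Nat.le_add_left 1 n) y (by rw [hcast]; exact hlt)
            rw [h1]
            simp
        rw [h1, hIdef]
        exact (setLIntegral_congr Ioo_ae_eq_Ico).symm
      -- left part equals J n
      have hleft : (∫⁻ y in Ioo (-(((n : ℝ) + 1) * b)) (-((n : ℝ) * b)),
            ENNReal.ofReal ((φ (n + 1) y) ^ 2)) = J n := by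
        have h1 : (∫⁻ y in Ioo (-(((n : ℝ) + 1) * b)) (-((n : ℝ) * b)),
              ENNReal.ofReal ((φ (n + 1) y) ^ 2))
            = ∫⁻ y in Ioo (-(((n : ℝ) + 1) * b)) (-((n : ℝ) * b)),
              ENNReal.ofReal ((φ n ((-2 * (n : ℝ) * b) - y)) ^ 2) := by
          refine setLIntegral_congr_fun measurableSet_Ioo ?_
          intro y hy
          beta_reduce
          have h2 := hrec₂ (n + 1) (Nat.le_add_left 1 n) y (by rw [hcast]; exact hy.2.le)
          rw [hcast] at h2
          simp only [Nat.add_sub_cancel] at h2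
          rw [h2]
          ring_nf
        rw [h1, refl_lintegral_s7 (-2 * (n : ℝ) * b) (-(((n : ℝ) + 1) * b)) (-((n : ℝ) * b))
          (fun x => ENNReal.ofReal ((φ n x) ^ 2)), hJdef]
        congr 1 <;> ring
      rw [hmain, hleft, hright, add_comm]
    intro n
    rw [← hI0]
    show I n ≤ ((n : ℝ≥0∞) + 1) * I 0
    induction n with
    | zero => simp
    | succ k ih =>
      calc I (k + 1) = I k + J k := hstep k
        _ ≤ ((k : ℝ≥0∞) + 1) * I 0 + I 0 := add_le_add ih (hJle k)
        _ = (((k + 1 : ℕ) : ℝ≥0∞) + 1) * I 0 := by push_cast; ring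
end

section
/- Let g, h : (0,1) → ℝ be measurable with 0 < g₀ ≤ g(x) ≤ g₁ and 0 ≤ h(x) ≤ h₁ for all x ∈ (0,1), and let ε > 0 satisfy ε h₁ ≤ g₀. Set Ω = {(x₁,x₂) ∈ ℝ² : 0 < x₁ < 1, 0 < x₂ < g(x₁)} and θ = {(x₁,x₂) : 0 < x₁ < 1, g(x₁) − εh(x₁) < x₂ < g(x₁)}. Then for every continuously differentiable u : ℝ² → ℝ, (1/ε) ∫_θ |u|² ≤ 2h₁ ( ∫₀¹ |u(x₁,0)|² dx₁ + g₁ ∫_Ω |∂u/∂x₂|² ). -/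
open MeasureTheory Set

/-- Cauchy–Schwarz for set integrals on ℝ. -/
lemma sq_setIntegral_le {s : Set ℝ} (hμ : volume s ≠ ⊤) {f : ℝ → ℝ}
    (hf : IntegrableOn f s) (hf2 : IntegrableOn (fun t => f t ^ 2) s) :
    (∫ t in s, f t) ^ 2 ≤ (volume s).toReal * ∫ t in s, f t ^ 2 := by
  set m := (volume s).toReal with hm
  set A := ∫ t in s, f t with hA
  set B := ∫ t in s, f t ^ 2 with hB
  have key : ∀ c : ℝ, 0 ≤ m * (c * c) + (-(2 * A)) * c + B := by
    intro c
    have h0 : 0 ≤ ∫ t in s, (f t - c) ^ 2 :=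
      integral_nonneg fun t => sq_nonneg _
    have h1 : Integrable (fun t => f t ^ 2 - 2 * c * f t) (volume.restrict s) :=
      hf2.sub (hf.const_mul (2 * c))
    have h2 : Integrable (fun _ : ℝ => c ^ 2) (volume.restrict s) :=
      integrableOn_const hμ
    have hexp : ∫ t in s, (f t - c) ^ 2
        = B - 2 * c * A + c ^ 2 * m := by
      have heq : (fun t => (f t - c) ^ 2)
          = fun t => (f t ^ 2 - 2 * c * f t) + c ^ 2 := by
        funext t; ring
      rw [heq, integral_add h1 h2,
        integral_sub hf2 (hf.const_mul (2 * c)), integral_const_mul,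
        setIntegral_const]
      simp [smul_eq_mul]; simp only [Measure.real]; ring
    nlinarith [hexp ▸ h0]
  have hd := discrim_le_zero key
  rw [discrim] at hd
  nlinarith [hd]

/-- Fubini for integrals over a region between two graphs over `(0,1)`. -/
lemma region_fubini (a b : ℝ → ℝ) (ha : Measurable a) (hb : Measurable b)
    (c C : ℝ) (hab : ∀ x ∈ Ioo (0 : ℝ) 1, c ≤ a x ∧ b x ≤ C)
    (f : ℝ × ℝ → ℝ) (hf : Continuous f) :
    IntegrableOn (fun x => ∫ y in Ioo (a x) (b x), f (x, y)) (Ioo (0 : ℝ) 1) ∧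
    (∫ p in {q : ℝ × ℝ | q.1 ∈ Ioo (0 : ℝ) 1 ∧ q.2 ∈ Ioo (a q.1) (b q.1)}, f p)
      = ∫ x in Ioo (0 : ℝ) 1, ∫ y in Ioo (a x) (b x), f (x, y) := by
  set S : Set (ℝ × ℝ) := {q : ℝ × ℝ | q.1 ∈ Ioo (0 : ℝ) 1 ∧ q.2 ∈ Ioo (a q.1) (b q.1)}
    with hSdef
  have hS : MeasurableSet S := by
    have m0 : MeasurableSet {q : ℝ × ℝ | q.1 ∈ Ioo (0 : ℝ) 1} :=
      measurableSet_Ioo.preimage measurable_fst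
    have m1 : MeasurableSet {q : ℝ × ℝ | a q.1 < q.2} :=
      measurableSet_lt (ha.comp measurable_fst) measurable_snd
    have m2 : MeasurableSet {q : ℝ × ℝ | q.2 < b q.1} :=
      measurableSet_lt measurable_snd (hb.comp measurable_fst)
    have : S = {q : ℝ × ℝ | q.1 ∈ Ioo (0 : ℝ) 1} ∩
        ({q : ℝ × ℝ | a q.1 < q.2} ∩ {q : ℝ × ℝ | q.2 < b q.1}) := by
      ext q; simp [hSdef, mem_Ioo, and_assoc]
    rw [this]; exact m0.inter (m1.inter m2)
  have hsub : S ⊆ Icc (0 : ℝ) 1 ×ˢ Icc c C := by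
    rintro q ⟨hq1, hq2⟩
    obtain ⟨hc, hC⟩ := hab q.1 hq1
    exact ⟨⟨hq1.1.le, hq1.2.le⟩, ⟨le_trans hc hq2.1.le, le_trans hq2.2.le hC⟩⟩
  have hK : IsCompact (Icc (0 : ℝ) 1 ×ˢ Icc c C) := isCompact_Icc.prod isCompact_Icc
  have hIntS : IntegrableOn f S := by
    exact (hf.continuousOn.integrableOn_compact hK).mono_set hsub
  have hind : Integrable (S.indicator f) := (integrable_indicator_iff hS).mpr hIntS
  have hind' : Integrable (S.indicator f) ((volume : Measure ℝ).prod volume) := by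
    rwa [← Measure.volume_eq_prod]
  have hxeq : ∀ x : ℝ, (∫ y, S.indicator f (x, y))
      = (Ioo (0 : ℝ) 1).indicator (fun x => ∫ y in Ioo (a x) (b x), f (x, y)) x := by
    intro x
    by_cases hx : x ∈ Ioo (0 : ℝ) 1
    · rw [indicator_of_mem hx, ← integral_indicator measurableSet_Ioo]
      congr 1; funext y
      by_cases hy : y ∈ Ioo (a x) (b x)
      · rw [indicator_of_mem hy, indicator_of_mem (by exact ⟨hx, hy⟩)]
      · rw [indicator_of_notMem hy, indicator_of_notMem (by
          intro hmem; exact hy hmem.2)]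
    · have hz : ∀ y : ℝ, S.indicator f (x, y) = 0 := fun y =>
        indicator_of_notMem (fun hmem => hx hmem.1) _
      rw [indicator_of_notMem hx]
      simp [hz]
  constructor
  · have hmar : Integrable (fun x => ∫ y, S.indicator f (x, y)) (volume : Measure ℝ) :=
      hind'.integral_prod_left
    have : Integrable ((Ioo (0 : ℝ) 1).indicator
        (fun x => ∫ y in Ioo (a x) (b x), f (x, y))) (volume : Measure ℝ) := by
      have hfun : (fun x => ∫ y, S.indicator f (x, y))
          = (Ioo (0 : ℝ) 1).indicator (fun x => ∫ y in Ioo (a x) (b x), f (x, y)) :=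
        funext hxeq
      rwa [hfun] at hmar
    exact (integrable_indicator_iff measurableSet_Ioo).mp this
  · rw [← integral_indicator hS]
    have h1 : (∫ p, S.indicator f p)
        = ∫ x, ∫ y, S.indicator f (x, y) := by
      rw [Measure.volume_eq_prod]; exact integral_prod _ hind'
    rw [h1]
    have h2 : (∫ x, ∫ y, S.indicator f (x, y))
        = ∫ x, (Ioo (0 : ℝ) 1).indicator (fun x => ∫ y in Ioo (a x) (b x), f (x, y)) x := by
      congr 1; funext x; exact hxeq x
    rw [h2, integral_indicator measurableSet_Ioo]

/-- Let `0 < g₀ ≤ g ≤ g₁` and `0 ≤ h ≤ h₁` on `(0,1)` be measurable, and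
`ε > 0` with `ε h₁ ≤ g₀`. With `Ω = {(x₁,x₂) : 0 < x₁ < 1, 0 < x₂ < g x₁}` and
`θ = {(x₁,x₂) : 0 < x₁ < 1, g x₁ - ε h x₁ < x₂ < g x₁}`, every `C¹` function
`u : ℝ² → ℝ` satisfies
`(1/ε) ∫_θ |u|² ≤ 2h₁ (∫₀¹ |u(x₁,0)|² dx₁ + g₁ ∫_Ω |∂u/∂x₂|²)`. -/
theorem concentrated_integral_trace_bound (g₀ g₁ h₁ ε : ℝ) (g h : ℝ → ℝ)
    (hg_meas : Measurable g) (hh_meas : Measurable h) (hg₀ : 0 < g₀)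
    (hg_bd : ∀ x ∈ Ioo (0 : ℝ) 1, g₀ ≤ g x ∧ g x ≤ g₁)
    (hh_bd : ∀ x ∈ Ioo (0 : ℝ) 1, 0 ≤ h x ∧ h x ≤ h₁)
    (hε : 0 < ε) (hεh : ε * h₁ ≤ g₀)
    (u : ℝ × ℝ → ℝ) (hu : ContDiff ℝ 1 u) :
    (1 / ε) * ∫ p in {q : ℝ × ℝ | q.1 ∈ Ioo (0 : ℝ) 1 ∧
        q.2 ∈ Ioo (g q.1 - ε * h q.1) (g q.1)}, (u p) ^ 2
      ≤ 2 * h₁ * ((∫ x in Ioo (0 : ℝ) 1, (u (x, 0)) ^ 2) +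
          g₁ * ∫ p in {q : ℝ × ℝ | q.1 ∈ Ioo (0 : ℝ) 1 ∧ q.2 ∈ Ioo (0 : ℝ) (g q.1)},
            (deriv (fun t => u (p.1, t)) p.2) ^ 2) := by
  
  have h12 : (1 / 2 : ℝ) ∈ Ioo (0 : ℝ) 1 := by norm_num
  have hg₁pos : 0 < g₁ := lt_of_lt_of_le hg₀ ((hg_bd _ h12).1.trans (hg_bd _ h12).2)
  have hh₁ : 0 ≤ h₁ := le_trans (hh_bd _ h12).1 (hh_bd _ h12).2
  -- the partial derivative and its continuity
  have hφ : ∀ x : ℝ, ContDiff ℝ 1 (fun t => u (x, t)) := fun x =>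
    hu.comp ((contDiff_const (c := x)).prodMk contDiff_id)
  have hline : ∀ p : ℝ × ℝ, HasDerivAt (fun t => u (p.1, t)) ((fderiv ℝ u p) (0, 1)) p.2 := by
    intro p
    have h1 : HasFDerivAt u (fderiv ℝ u p) p := (hu.differentiable one_ne_zero p).hasFDerivAt
    have h2 : HasDerivAt (fun t : ℝ => ((p.1, t) : ℝ × ℝ)) ((0 : ℝ), (1 : ℝ)) p.2 :=
      (hasDerivAt_const p.2 p.1).prodMk (hasDerivAt_id p.2)
    exact h1.comp_hasDerivAt p.2 h2
  have hd_eq : (fun p : ℝ × ℝ => deriv (fun t => u (p.1, t)) p.2)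
      = fun p => (fderiv ℝ u p) (0, 1) := funext fun p => (hline p).deriv
  have hd_cont : Continuous (fun p : ℝ × ℝ => deriv (fun t => u (p.1, t)) p.2) := by
    rw [hd_eq]; exact (hu.continuous_fderiv one_ne_zero).clm_apply continuous_const
  have hfθ : Continuous (fun p : ℝ × ℝ => (u p) ^ 2) := hu.continuous.pow 2
  have hfΩ : Continuous (fun p : ℝ × ℝ => (deriv (fun t => u (p.1, t)) p.2) ^ 2) :=
    hd_cont.pow 2
  have ha_meas : Measurable (fun x => g x - ε * h x) := hg_meas.sub (hh_meas.const_mul ε)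
  have habθ : ∀ x ∈ Ioo (0 : ℝ) 1, (0 : ℝ) ≤ g x - ε * h x ∧ g x ≤ g₁ := by
    intro x hx
    obtain ⟨hg1, hg2⟩ := hg_bd x hx; obtain ⟨hh1, hh2⟩ := hh_bd x hx
    exact ⟨by nlinarith, hg2⟩
  have habΩ : ∀ x ∈ Ioo (0 : ℝ) 1, (0 : ℝ) ≤ (fun _ : ℝ => (0 : ℝ)) x ∧ g x ≤ g₁ := by
    intro x hx; exact ⟨le_refl _, (hg_bd x hx).2⟩
  obtain ⟨hFint, hFeq⟩ := region_fubini (fun x => g x - ε * h x) g ha_meas hg_meas 0 g₁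
    habθ (fun p => (u p) ^ 2) hfθ
  obtain ⟨hGint, hGeq⟩ := region_fubini (fun _ => (0 : ℝ)) g measurable_const hg_meas 0 g₁
    habΩ (fun p => (deriv (fun t => u (p.1, t)) p.2) ^ 2) hfΩ
  set F : ℝ → ℝ := fun x => ∫ y in Ioo (g x - ε * h x) (g x), (u (x, y)) ^ 2 with hF_def
  set G : ℝ → ℝ := fun x => ∫ y in Ioo (0 : ℝ) (g x),
    (deriv (fun s => u (x, s)) y) ^ 2 with hG_def
  have hFint' : IntegrableOn F (Ioo (0 : ℝ) 1) := hFint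
  have hGint' : IntegrableOn G (Ioo (0 : ℝ) 1) := hGint
  -- pointwise-in-x estimate
  have hptF : ∀ x ∈ Ioo (0 : ℝ) 1,
      F x ≤ ε * h₁ * (2 * (u (x, 0)) ^ 2 + 2 * g₁ * G x) := by
    intro x hx
    obtain ⟨hgl, hgu⟩ := hg_bd x hx; obtain ⟨hhl, hhu⟩ := hh_bd x hx
    have hεh' : 0 ≤ g x - ε * h x := by nlinarith
    have hG0 : 0 ≤ G x := integral_nonneg fun y => sq_nonneg _
    have hfcont : Continuous (fun t => deriv (fun s => u (x, s)) t) :=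
      (hφ x).continuous_deriv le_rfl
    have hIdsq : IntegrableOn (fun y => (deriv (fun s => u (x, s)) y) ^ 2)
        (Ioo (0 : ℝ) (g x)) :=
      ((hfcont.pow 2).continuousOn.integrableOn_compact
        (isCompact_Icc (a := (0:ℝ)) (b := g x))).mono_set Ioo_subset_Icc_self
    have hkey : ∀ y ∈ Ioo (g x - ε * h x) (g x),
        (u (x, y)) ^ 2 ≤ 2 * (u (x, 0)) ^ 2 + 2 * g₁ * G x := by
      intro y hy
      have hy0 : 0 < y := lt_of_le_of_lt hεh' hy.1
      have hyg : y < g x := hy.2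
      have hyg1 : y ≤ g₁ := hyg.le.trans hgu
      have hft : ∫ t in (0 : ℝ)..y, deriv (fun s => u (x, s)) t = u (x, y) - u (x, 0) :=
        intervalIntegral.integral_deriv_eq_sub
          (fun t _ => ((hφ x).differentiable one_ne_zero).differentiableAt)
          (hfcont.intervalIntegrable 0 y)
      set I := ∫ t in (0 : ℝ)..y, deriv (fun s => u (x, s)) t with hI_def
      have hIoc : I = ∫ t in Ioc (0 : ℝ) y, deriv (fun s => u (x, s)) t :=
        intervalIntegral.integral_of_le hy0.le
      have hvol : volume (Ioc (0 : ℝ) y) ≠ ⊤ := measure_Ioc_lt_top.ne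
      have hint1 : IntegrableOn (fun t => deriv (fun s => u (x, s)) t) (Ioc (0 : ℝ) y) :=
        (hfcont.continuousOn.integrableOn_compact
          (isCompact_Icc (a := (0:ℝ)) (b := y))).mono_set Ioc_subset_Icc_self
      have hint2 : IntegrableOn (fun t => (deriv (fun s => u (x, s)) t) ^ 2)
          (Ioc (0 : ℝ) y) :=
        ((hfcont.pow 2).continuousOn.integrableOn_compact
          (isCompact_Icc (a := (0:ℝ)) (b := y))).mono_set Ioc_subset_Icc_self
      have hcs := sq_setIntegral_le hvol hint1 hint2
      have hvt : (volume (Ioc (0 : ℝ) y)).toReal = y := by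
        rw [Real.volume_Ioc, ENNReal.toReal_ofReal (by linarith)]; ring
      have hmono : ∫ t in Ioc (0 : ℝ) y, (deriv (fun s => u (x, s)) t) ^ 2 ≤ G x := by
        refine setIntegral_mono_set hIdsq (Filter.Eventually.of_forall fun t => sq_nonneg _)
          (HasSubset.Subset.eventuallyLE fun t ht => ⟨ht.1, lt_of_le_of_lt ht.2 hyg⟩)
      have hIocnn : 0 ≤ ∫ t in Ioc (0 : ℝ) y, (deriv (fun s => u (x, s)) t) ^ 2 :=
        integral_nonneg fun t => sq_nonneg _
      have hcs' : I ^ 2 ≤ g₁ * G x := by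
        rw [hIoc]
        calc (∫ t in Ioc (0 : ℝ) y, deriv (fun s => u (x, s)) t) ^ 2
            ≤ y * ∫ t in Ioc (0 : ℝ) y, (deriv (fun s => u (x, s)) t) ^ 2 := by
              have hcs2 := hcs
              rw [hvt] at hcs2
              exact hcs2
          _ ≤ g₁ * G x := mul_le_mul hyg1 hmono hIocnn hg₁pos.le
      have hxy : u (x, y) = u (x, 0) + I := by linarith [hft]
      rw [hxy]
      nlinarith [sq_nonneg (u (x, 0) - I), hcs']
    have hslice_int : IntegrableOn (fun y => (u (x, y)) ^ 2)
        (Ioo (g x - ε * h x) (g x)) :=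
      (((hu.continuous.comp (continuous_const.prodMk continuous_id)).pow 2).continuousOn.integrableOn_compact
        (isCompact_Icc (a := g x - ε * h x) (b := g x))).mono_set Ioo_subset_Icc_self
    have hC0 : 0 ≤ 2 * (u (x, 0)) ^ 2 + 2 * g₁ * G x := by nlinarith [sq_nonneg (u (x, 0))]
    have hvt2 : (volume (Ioo (g x - ε * h x) (g x))).toReal = ε * h x := by
      rw [Real.volume_Ioo, ENNReal.toReal_ofReal (by nlinarith [mul_nonneg hε.le hhl])]; ring
    calc F x ≤ ∫ _ in Ioo (g x - ε * h x) (g x), (2 * (u (x, 0)) ^ 2 + 2 * g₁ * G x) :=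
        setIntegral_mono_on hslice_int
          (integrableOn_const measure_Ioo_lt_top.ne) measurableSet_Ioo hkey
      _ = (volume (Ioo (g x - ε * h x) (g x))).toReal * (2 * (u (x, 0)) ^ 2 + 2 * g₁ * G x) := by
        rw [setIntegral_const, smul_eq_mul]; rfl
      _ ≤ ε * h₁ * (2 * (u (x, 0)) ^ 2 + 2 * g₁ * G x) := by
        rw [hvt2]
        exact mul_le_mul_of_nonneg_right (by nlinarith) hC0
  -- integrate in x
  have hu0int : IntegrableOn (fun x => (u (x, 0)) ^ 2) (Ioo (0 : ℝ) 1) :=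
    (((hu.continuous.comp (continuous_id.prodMk continuous_const)).pow 2).continuousOn.integrableOn_compact
      (isCompact_Icc (a := (0:ℝ)) (b := (1:ℝ)))).mono_set Ioo_subset_Icc_self
  have heqfun : (fun x => ε * h₁ * (2 * (u (x, 0)) ^ 2 + 2 * g₁ * G x))
      = fun x => (ε * h₁ * 2) * (u (x, 0)) ^ 2 + (ε * h₁ * 2 * g₁) * G x := by
    funext x; ring
  have hRHSint : IntegrableOn (fun x => ε * h₁ * (2 * (u (x, 0)) ^ 2 + 2 * g₁ * G x))
      (Ioo (0 : ℝ) 1) := by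
    rw [heqfun]
    exact (hu0int.const_mul (ε * h₁ * 2)).add (hGint'.const_mul (ε * h₁ * 2 * g₁))
  have hmono2 : ∫ x in Ioo (0 : ℝ) 1, F x
      ≤ ∫ x in Ioo (0 : ℝ) 1, ε * h₁ * (2 * (u (x, 0)) ^ 2 + 2 * g₁ * G x) :=
    setIntegral_mono_on hFint' hRHSint measurableSet_Ioo hptF
  have hsplit : ∫ x in Ioo (0 : ℝ) 1, ε * h₁ * (2 * (u (x, 0)) ^ 2 + 2 * g₁ * G x)
      = (ε * h₁ * 2) * (∫ x in Ioo (0 : ℝ) 1, (u (x, 0)) ^ 2)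
        + (ε * h₁ * 2 * g₁) * ∫ x in Ioo (0 : ℝ) 1, G x := by
    rw [heqfun, integral_add (hu0int.const_mul (ε * h₁ * 2))
      (hGint'.const_mul (ε * h₁ * 2 * g₁)), integral_const_mul, integral_const_mul]
  have hθ : (∫ p in {q : ℝ × ℝ | q.1 ∈ Ioo (0 : ℝ) 1 ∧
      q.2 ∈ Ioo (g q.1 - ε * h q.1) (g q.1)}, (u p) ^ 2) = ∫ x in Ioo (0 : ℝ) 1, F x := hFeq
  have hΩ : (∫ p in {q : ℝ × ℝ | q.1 ∈ Ioo (0 : ℝ) 1 ∧ q.2 ∈ Ioo (0 : ℝ) (g q.1)},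
      (deriv (fun t => u (p.1, t)) p.2) ^ 2) = ∫ x in Ioo (0 : ℝ) 1, G x := hGeq
  rw [hθ, hΩ]
  set A := ∫ x in Ioo (0 : ℝ) 1, (u (x, 0)) ^ 2 with hA_def
  set B := ∫ x in Ioo (0 : ℝ) 1, G x with hB_def
  have hstep : (1 / ε) * ∫ x in Ioo (0 : ℝ) 1, F x
      ≤ (1 / ε) * ((ε * h₁ * 2) * A + (ε * h₁ * 2 * g₁) * B) :=
    mul_le_mul_of_nonneg_left (hmono2.trans_eq hsplit) (by positivity)
  have hfin : (1 / ε) * ((ε * h₁ * 2) * A + (ε * h₁ * 2 * g₁) * B)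
      = 2 * h₁ * (A + g₁ * B) := by
    field_simp
  linarith [hstep, hfin ▸ hstep]
end

section
/- Let g, h : (0,1) → ℝ be measurable with 0 < g₀ ≤ g(x) ≤ g₁ and 0 ≤ h(x) ≤ h₁ for all x ∈ (0,1), and let ε > 0 satisfy ε h₁ ≤ g₀. Set Ω = {(x₁,x₂) ∈ ℝ² : 0 < x₁ < 1, 0 < x₂ < g(x₁)} and θ = {(x₁,x₂) : 0 < x₁ < 1, g(x₁) − εh(x₁) < x₂ < g(x₁)}. Then there exists a constant C > 0, depending only on g₀, g₁ and h₁ (in particular independent of ε and u), such that for every continuously differentiable u : ℝ² → ℝ, (1/ε) ∫_θ |u|² ≤ C ( ∫_Ω |u|² + ∫_Ω |∂u/∂x₂|² ). -/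
open MeasureTheory Set
open ENNReal intervalIntegral Interval


lemma aux_lintegral_region (f g : ℝ → ℝ) (hf : Measurable f) (hg : Measurable g)
    (s : Set ℝ) (hs : MeasurableSet s) (F : ℝ × ℝ → ℝ≥0∞) (hF : Measurable F) :
    ∫⁻ p in regionBetween f g s, F p = ∫⁻ x in s, ∫⁻ y in Ioo (f x) (g x), F (x, y) := by
  rw [← lintegral_indicator (measurableSet_regionBetween hf hg hs)]
  rw [Measure.volume_eq_prod, lintegral_prod _ ((hF.indicator
    (measurableSet_regionBetween hf hg hs)).aemeasurable)]
  rw [← lintegral_indicator hs]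
  congr 1
  funext x
  by_cases hx : x ∈ s
  · rw [indicator_of_mem hx, ← lintegral_indicator measurableSet_Ioo]
    congr 1; funext y
    by_cases hy : y ∈ Ioo (f x) (g x)
    · rw [indicator_of_mem hy,
        indicator_of_mem (show (x, y) ∈ regionBetween f g s from ⟨hx, hy⟩)]
    · rw [indicator_of_notMem hy, indicator_of_notMem (fun hmem => hy hmem.2)]
  · rw [indicator_of_notMem hx]
    rw [show (fun y => (regionBetween f g s).indicator F (x, y)) = fun _ => 0 from
      funext fun y => indicator_of_notMem (fun hmem => hx hmem.1) _, lintegral_zero]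


lemma oneD (g₀ : ℝ) (hg₀ : 0 < g₀) {a : ℝ} (ha : g₀ ≤ a) (f : ℝ → ℝ)
    (hf : ContDiff ℝ 1 f) {y : ℝ} (hy : y ∈ Ioo (0:ℝ) a) :
    f y ^ 2 ≤ (1/g₀ + 1) * (∫ z in Ioo (0:ℝ) a, f z ^ 2) + ∫ z in Ioo (0:ℝ) a, (deriv f z) ^ 2 := by
  have ha0 : (0:ℝ) < a := lt_of_lt_of_le hg₀ ha
  have hfc : Continuous f := hf.continuous
  have hfd : Continuous (deriv f) := hf.continuous_deriv le_rfl
  have hint2 : IntegrableOn (fun z => f z ^ 2) (Ioo 0 a) :=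
    ((hfc.pow 2).integrableOn_Icc).mono_set Ioo_subset_Icc_self
  have hintd2 : IntegrableOn (fun z => (deriv f z) ^ 2) (Ioo 0 a) :=
    ((hfd.pow 2).integrableOn_Icc).mono_set Ioo_subset_Icc_self
  set I₁ := ∫ z in Ioo (0:ℝ) a, f z ^ 2 with hI₁
  set I₂ := ∫ z in Ioo (0:ℝ) a, (deriv f z) ^ 2 with hI₂
  have hI₁0 : 0 ≤ I₁ := setIntegral_nonneg measurableSet_Ioo fun z _ => sq_nonneg _
  have hI₂0 : 0 ≤ I₂ := setIntegral_nonneg measurableSet_Ioo fun z _ => sq_nonneg _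
  -- step: pointwise in z
  have step : ∀ z ∈ Ioo (0:ℝ) a, f y ^ 2 ≤ f z ^ 2 + (I₁ + I₂) := by
    intro z hz
    have hftc : ∫ t in z..y, 2 * f t * deriv f t = f y ^ 2 - f z ^ 2 := by
      apply integral_eq_sub_of_hasDerivAt
      · intro t _
        have := ((hf.differentiable one_ne_zero t).hasDerivAt).fun_pow 2
        simpa [mul_comm, mul_assoc, mul_left_comm] using this
      · exact ((continuous_const.mul hfc).mul hfd).intervalIntegrable _ _
    have hb1 : f y ^ 2 - f z ^ 2 ≤ |∫ t in z..y, 2 * f t * deriv f t| :=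
      hftc ▸ le_abs_self _
    have hb2 : |∫ t in z..y, 2 * f t * deriv f t| ≤ ∫ t in Ι z y, |2 * f t * deriv f t| := by
      simpa only [Real.norm_eq_abs] using
        (norm_integral_le_integral_norm_uIoc (μ := volume)
          (f := fun t => 2 * f t * deriv f t) (a := z) (b := y))
    have hb3 : (∫ t in Ι z y, |2 * f t * deriv f t|) ≤ ∫ t in Ι z y, (f t ^ 2 + (deriv f t) ^ 2) := by
      apply setIntegral_mono_on
      · exact ((continuous_const.mul hfc).mul hfd).abs.integrableOn_uIoc
      · exact ((hfc.pow 2).add (hfd.pow 2)).integrableOn_uIoc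
      · exact measurableSet_uIoc
      · intro t _
        have := sq_nonneg (|f t| - |deriv f t|)
        have h2 : |2 * f t * deriv f t| = 2 * (|f t| * |deriv f t|) := by
          rw [abs_mul, abs_mul]; simp [abs_of_nonneg, mul_assoc]
        nlinarith [sq_abs (f t), sq_abs (deriv f t)]
    have hsub : Ι z y ⊆ Ioo 0 a := by
      intro t ht
      exact ⟨lt_trans (lt_min hz.1 hy.1) ht.1, lt_of_le_of_lt ht.2 (max_lt hz.2 hy.2)⟩
    have hb4 : (∫ t in Ι z y, (f t ^ 2 + (deriv f t) ^ 2)) ≤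
        ∫ t in Ioo 0 a, (f t ^ 2 + (deriv f t) ^ 2) := by
      apply setIntegral_mono_set (hint2.add hintd2)
      · exact Filter.Eventually.of_forall fun t => add_nonneg (sq_nonneg _) (sq_nonneg _)
      · exact Filter.Eventually.of_forall hsub
    have hb5 : (∫ t in Ioo (0:ℝ) a, (f t ^ 2 + (deriv f t) ^ 2)) = I₁ + I₂ :=
      integral_add hint2 hintd2
    linarith
  -- averaging over z
  set c := f y ^ 2 - (I₁ + I₂) with hc
  have havg : (∫ _ in Ioo (0:ℝ) a, c) ≤ ∫ z in Ioo (0:ℝ) a, f z ^ 2 := by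
    apply setIntegral_mono_on (integrableOn_const ?_) hint2 measurableSet_Ioo
    · intro z hz; linarith [step z hz]
    · exact measure_Ioo_lt_top.ne
  have hconst : (∫ _ in Ioo (0:ℝ) a, c) = c * a := by
    rw [setIntegral_const, Real.volume_real_Ioo_of_le (by linarith), smul_eq_mul]
    ring
  have hca : c * a ≤ I₁ := hconst ▸ havg
  rcases le_or_gt 0 c with hc0 | hc0
  · have h1 : c * g₀ ≤ c * a := mul_le_mul_of_nonneg_left ha hc0
    have h2 : c ≤ I₁ / g₀ := (le_div_iff₀ hg₀).2 (le_trans h1 hca)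
    have : I₁ / g₀ = (1/g₀) * I₁ := by ring
    linarith [this ▸ h2]
  · have : (0:ℝ) ≤ (1/g₀) * I₁ := mul_nonneg (by positivity) hI₁0
    linarith

/-- Given `0 < g₀ ≤ g₁` and `h₁ ≥ 0`, there is a constant `C > 0`,
depending only on `g₀, g₁, h₁` (in particular independent of `ε`, `g`, `h` and `u`),
such that for all measurable `g, h` on `(0,1)` with `g₀ ≤ g ≤ g₁`, `0 ≤ h ≤ h₁`, and all
`ε > 0` with `ε h₁ ≤ g₀`, every `C¹` function `u : ℝ² → ℝ` satisfies
`(1/ε) ∫_θ |u|² ≤ C (∫_Ω |u|² + ∫_Ω |∂u/∂x₂|²)`, where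
`Ω = {(x₁,x₂) : 0 < x₁ < 1, 0 < x₂ < g x₁}` and
`θ = {(x₁,x₂) : 0 < x₁ < 1, g x₁ - ε h x₁ < x₂ < g x₁}`. -/
theorem concentrated_integral_H1_bound (g₀ g₁ h₁ : ℝ) (hg₀ : 0 < g₀) (hg₀₁ : g₀ ≤ g₁)
    (hh₁ : 0 ≤ h₁) :
    ∃ C : ℝ, 0 < C ∧
      ∀ g h : ℝ → ℝ, Measurable g → Measurable h →
      (∀ x ∈ Ioo (0 : ℝ) 1, g₀ ≤ g x ∧ g x ≤ g₁) →
      (∀ x ∈ Ioo (0 : ℝ) 1, 0 ≤ h x ∧ h x ≤ h₁) →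
      ∀ ε : ℝ, 0 < ε → ε * h₁ ≤ g₀ →
      ∀ u : ℝ × ℝ → ℝ, ContDiff ℝ 1 u →
      (1 / ε) * ∫ p in {q : ℝ × ℝ | q.1 ∈ Ioo (0 : ℝ) 1 ∧
          q.2 ∈ Ioo (g q.1 - ε * h q.1) (g q.1)}, (u p) ^ 2
        ≤ C * ((∫ p in {q : ℝ × ℝ | q.1 ∈ Ioo (0 : ℝ) 1 ∧ q.2 ∈ Ioo (0 : ℝ) (g q.1)},
              (u p) ^ 2) +
            ∫ p in {q : ℝ × ℝ | q.1 ∈ Ioo (0 : ℝ) 1 ∧ q.2 ∈ Ioo (0 : ℝ) (g q.1)},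
              (deriv (fun t => u (p.1, t)) p.2) ^ 2) := by
  set K : ℝ := 1/g₀ + 1 with hKdef
  have hK0 : 0 < K := by positivity
  have hK1 : 1 ≤ K := by
    have : 0 < 1/g₀ := by positivity
    simp only [hKdef]; linarith
  refine ⟨K * h₁ + 1, by positivity, ?_⟩
  intro g h hgm hhm hgb hhb ε hε hεh u hu
  -- partial derivative
  set D : ℝ × ℝ → ℝ := fun p => fderiv ℝ u p (0, 1) with hDdef
  have hDc : Continuous D := (hu.continuous_fderiv one_ne_zero).clm_apply continuous_const
  have hderiv : ∀ p : ℝ × ℝ, HasDerivAt (fun t => u (p.1, t)) (D p) p.2 := by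
    intro p
    have h1 : HasFDerivAt u (fderiv ℝ u p) p := (hu.differentiable one_ne_zero p).hasFDerivAt
    have h2 : HasDerivAt (fun t : ℝ => (p.1, t)) ((0 : ℝ), (1 : ℝ)) p.2 :=
      (hasDerivAt_const _ _).prodMk (hasDerivAt_id _)
    exact h1.comp_hasDerivAt p.2 h2
  have hdG : ∀ p : ℝ × ℝ, deriv (fun t => u (p.1, t)) p.2 = D p := fun p => (hderiv p).deriv
  set F : ℝ × ℝ → ℝ := fun p => u p ^ 2 with hFdef
  set G : ℝ × ℝ → ℝ := fun p => D p ^ 2 with hGdef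
  have hFc : Continuous F := (hu.continuous).pow 2
  have hGc : Continuous G := hDc.pow 2
  simp only [hdG]
  -- sets
  set lo : ℝ → ℝ := fun x => g x - ε * h x with hlodef
  have hlom : Measurable lo := hgm.sub (measurable_const.mul hhm)
  have hθ : {q : ℝ × ℝ | q.1 ∈ Ioo (0:ℝ) 1 ∧ q.2 ∈ Ioo (g q.1 - ε * h q.1) (g q.1)} =
      regionBetween lo g (Ioo 0 1) := rfl
  have hΩ : {q : ℝ × ℝ | q.1 ∈ Ioo (0:ℝ) 1 ∧ q.2 ∈ Ioo (0:ℝ) (g q.1)} =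
      regionBetween (fun _ => 0) g (Ioo 0 1) := rfl
  rw [hθ, hΩ]
  set Fl : ℝ × ℝ → ℝ≥0∞ := fun p => ENNReal.ofReal (F p) with hFldef
  set Gl : ℝ × ℝ → ℝ≥0∞ := fun p => ENNReal.ofReal (G p) with hGldef
  have hFlm : Measurable Fl := hFc.measurable.ennreal_ofReal
  have hGlm : Measurable Gl := hGc.measurable.ennreal_ofReal
  set A : ℝ≥0∞ := ∫⁻ p in regionBetween (fun _ => 0) g (Ioo 0 1), Fl p with hAdef
  set B : ℝ≥0∞ := ∫⁻ p in regionBetween (fun _ => 0) g (Ioo 0 1), Gl p with hBdef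
  set L : ℝ≥0∞ := ∫⁻ p in regionBetween lo g (Ioo 0 1), Fl p with hLdef
  -- slice integrals
  have hsliceF : ∀ x : ℝ, IntegrableOn (fun t => F (x, t)) (Ioo 0 (g x)) := fun x =>
    ((hFc.comp (continuous_const.prodMk continuous_id)).integrableOn_Icc).mono_set
      Ioo_subset_Icc_self
  have hsliceG : ∀ x : ℝ, IntegrableOn (fun t => G (x, t)) (Ioo 0 (g x)) := fun x =>
    ((hGc.comp (continuous_const.prodMk continuous_id)).integrableOn_Icc).mono_set
      Ioo_subset_Icc_self
  have hI₁0 : ∀ x : ℝ, 0 ≤ ∫ t in Ioo (0:ℝ) (g x), F (x, t) := fun x =>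
    setIntegral_nonneg measurableSet_Ioo fun t _ => sq_nonneg _
  have hI₂0 : ∀ x : ℝ, 0 ≤ ∫ t in Ioo (0:ℝ) (g x), G (x, t) := fun x =>
    setIntegral_nonneg measurableSet_Ioo fun t _ => sq_nonneg _
  -- pointwise bound on the strip
  have ptBound : ∀ x ∈ Ioo (0:ℝ) 1, ∀ y ∈ Ioo (lo x) (g x),
      F (x, y) ≤ K * ((∫ t in Ioo (0:ℝ) (g x), F (x, t)) + ∫ t in Ioo (0:ℝ) (g x), G (x, t)) := by
    intro x hx y hy
    have hgx := hgb x hx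
    have hhx := hhb x hx
    have hy0 : 0 < y := by
      have h1 : ε * h x ≤ ε * h₁ := mul_le_mul_of_nonneg_left hhx.2 hε.le
      have : lo x ≥ 0 := by simp only [hlodef]; linarith [hgx.1]
      linarith [hy.1]
    have hyIoo : y ∈ Ioo (0:ℝ) (g x) := ⟨hy0, hy.2⟩
    have hfx : ContDiff ℝ 1 (fun t => u (x, t)) :=
      hu.comp (contDiff_const.prodMk contDiff_id)
    have key := oneD g₀ hg₀ hgx.1 (fun t => u (x, t)) hfx hyIoo
    have hde : (fun z => (deriv (fun t => u (x, t)) z) ^ 2) = fun z => G (x, z) := by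
      funext z
      have := hdG (x, z)
      simp only [hGdef]
      rw [← this]
    rw [hde] at key
    have hFxy : F (x, y) = (fun t => u (x, t)) y ^ 2 := rfl
    rw [hFxy]
    have h2 : (∫ t in Ioo (0:ℝ) (g x), G (x, t)) ≤ K * ∫ t in Ioo (0:ℝ) (g x), G (x, t) :=
      le_mul_of_one_le_left (hI₂0 x) hK1
    calc (fun t => u (x, t)) y ^ 2
        ≤ K * (∫ z in Ioo (0:ℝ) (g x), u (x, z) ^ 2) + ∫ z in Ioo (0:ℝ) (g x), G (x, z) := key
      _ ≤ K * ((∫ t in Ioo (0:ℝ) (g x), F (x, t)) + ∫ t in Ioo (0:ℝ) (g x), G (x, t)) := by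
          have : (∫ z in Ioo (0:ℝ) (g x), u (x, z) ^ 2) = ∫ t in Ioo (0:ℝ) (g x), F (x, t) := rfl
          rw [this, mul_add]
          linarith [h2]
  -- inner lintegral bound
  have inner : ∀ x ∈ Ioo (0:ℝ) 1,
      (∫⁻ y in Ioo (lo x) (g x), Fl (x, y)) ≤
      ENNReal.ofReal (ε * h₁) * (ENNReal.ofReal K *
        ∫⁻ y in Ioo (0:ℝ) (g x), (Fl (x, y) + Gl (x, y))) := by
    intro x hx
    set c : ℝ := K * ((∫ t in Ioo (0:ℝ) (g x), F (x, t)) +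
      ∫ t in Ioo (0:ℝ) (g x), G (x, t)) with hcdef
    have h1 : (∫⁻ y in Ioo (lo x) (g x), Fl (x, y)) ≤
        ∫⁻ _ in Ioo (lo x) (g x), ENNReal.ofReal c := by
      apply setLIntegral_mono' measurableSet_Ioo
      intro y hy
      exact ENNReal.ofReal_le_ofReal (ptBound x hx y hy)
    have h2 : (∫⁻ _ in Ioo (lo x) (g x), ENNReal.ofReal c) =
        ENNReal.ofReal c * volume (Ioo (lo x) (g x)) := setLIntegral_const _ _
    have h3 : volume (Ioo (lo x) (g x)) ≤ ENNReal.ofReal (ε * h₁) := by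
      rw [Real.volume_Ioo]
      apply ENNReal.ofReal_le_ofReal
      have hh := (hhb x hx).2
      have : ε * h x ≤ ε * h₁ := mul_le_mul_of_nonneg_left hh hε.le
      simp only [hlodef]; linarith
    have h5 : ENNReal.ofReal (∫ t in Ioo (0:ℝ) (g x), F (x, t)) =
        ∫⁻ y in Ioo (0:ℝ) (g x), Fl (x, y) :=
      ofReal_integral_eq_lintegral_ofReal (hsliceF x)
        (Filter.Eventually.of_forall fun t => sq_nonneg _)
    have h6 : ENNReal.ofReal (∫ t in Ioo (0:ℝ) (g x), G (x, t)) =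
        ∫⁻ y in Ioo (0:ℝ) (g x), Gl (x, y) :=
      ofReal_integral_eq_lintegral_ofReal (hsliceG x)
        (Filter.Eventually.of_forall fun t => sq_nonneg _)
    have h7 : (∫⁻ y in Ioo (0:ℝ) (g x), (Fl (x, y) + Gl (x, y))) =
        (∫⁻ y in Ioo (0:ℝ) (g x), Fl (x, y)) + ∫⁻ y in Ioo (0:ℝ) (g x), Gl (x, y) :=
      lintegral_add_left (hFlm.comp measurable_prodMk_left) _
    have h4 : ENNReal.ofReal c =
        ENNReal.ofReal K * ∫⁻ y in Ioo (0:ℝ) (g x), (Fl (x, y) + Gl (x, y)) := by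
      rw [hcdef, ENNReal.ofReal_mul hK0.le, ENNReal.ofReal_add (hI₁0 x) (hI₂0 x), h5, h6, h7]
    calc (∫⁻ y in Ioo (lo x) (g x), Fl (x, y))
        ≤ ENNReal.ofReal c * volume (Ioo (lo x) (g x)) := h2 ▸ h1
      _ ≤ ENNReal.ofReal c * ENNReal.ofReal (ε * h₁) := mul_le_mul_right h3 _
      _ = ENNReal.ofReal (ε * h₁) * (ENNReal.ofReal K *
            ∫⁻ y in Ioo (0:ℝ) (g x), (Fl (x, y) + Gl (x, y))) := by rw [h4, mul_comm]
  -- Tonelli representations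
  have hLrep : L = ∫⁻ x in Ioo (0:ℝ) 1, ∫⁻ y in Ioo (lo x) (g x), Fl (x, y) :=
    aux_lintegral_region lo g hlom hgm _ measurableSet_Ioo Fl hFlm
  have hABrep : (∫⁻ x in Ioo (0:ℝ) 1, ∫⁻ y in Ioo (0:ℝ) (g x), (Fl (x, y) + Gl (x, y)))
      = A + B := by
    have haux := aux_lintegral_region (fun _ => 0) g measurable_const hgm (Ioo (0:ℝ) 1)
      measurableSet_Ioo (fun p => Fl p + Gl p) (hFlm.add hGlm)
    rw [show (∫⁻ x in Ioo (0:ℝ) 1, ∫⁻ y in Ioo (0:ℝ) (g x), (Fl (x, y) + Gl (x, y)))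
      = ∫⁻ x in Ioo (0:ℝ) 1, ∫⁻ y in Ioo ((fun _ : ℝ => (0:ℝ)) x) (g x),
        (fun p : ℝ × ℝ => Fl p + Gl p) (x, y) from rfl, ← haux]
    exact lintegral_add_left hFlm _
  have chain : L ≤ ENNReal.ofReal (ε * h₁) * (ENNReal.ofReal K * (A + B)) := by
    rw [hLrep, ← hABrep]
    calc (∫⁻ x in Ioo (0:ℝ) 1, ∫⁻ y in Ioo (lo x) (g x), Fl (x, y))
        ≤ ∫⁻ x in Ioo (0:ℝ) 1, ENNReal.ofReal (ε * h₁) * (ENNReal.ofReal K *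
            ∫⁻ y in Ioo (0:ℝ) (g x), (Fl (x, y) + Gl (x, y))) :=
          setLIntegral_mono_ae' measurableSet_Ioo (Filter.Eventually.of_forall inner)
      _ = ENNReal.ofReal (ε * h₁) * (ENNReal.ofReal K *
            ∫⁻ x in Ioo (0:ℝ) 1, ∫⁻ y in Ioo (0:ℝ) (g x), (Fl (x, y) + Gl (x, y))) := by
          rw [lintegral_const_mul' _ _ ENNReal.ofReal_ne_top]
          congr 1
          rw [lintegral_const_mul' _ _ ENNReal.ofReal_ne_top]
  -- finiteness of A and B
  have hΩsub : regionBetween (fun _ => (0:ℝ)) g (Ioo 0 1) ⊆ Icc (0:ℝ) 1 ×ˢ Icc (0:ℝ) g₁ := by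
    rintro ⟨x, y⟩ ⟨hx, hy⟩
    exact ⟨⟨hx.1.le, hx.2.le⟩, ⟨hy.1.le, le_trans hy.2.le (hgb x hx).2⟩⟩
  have hcomp : IsCompact (Icc (0:ℝ) 1 ×ˢ Icc (0:ℝ) g₁) := isCompact_Icc.prod isCompact_Icc
  have hne : (Icc (0:ℝ) 1 ×ˢ Icc (0:ℝ) g₁).Nonempty :=
    ⟨(0, 0), ⟨⟨le_refl 0, zero_le_one⟩, ⟨le_refl 0, (by linarith : (0:ℝ) ≤ g₁)⟩⟩⟩
  have hΩmeas : MeasurableSet (regionBetween (fun _ => (0:ℝ)) g (Ioo 0 1)) :=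
    measurableSet_regionBetween measurable_const hgm measurableSet_Ioo
  have finbound : ∀ (Φ : ℝ × ℝ → ℝ), Continuous Φ →
      (∫⁻ p in regionBetween (fun _ => (0:ℝ)) g (Ioo 0 1), ENNReal.ofReal (Φ p)) ≠ ⊤ := by
    intro Φ hΦ
    obtain ⟨p0, _, hp0⟩ := hcomp.exists_isMaxOn hne hΦ.continuousOn
    have hbd : (∫⁻ p in regionBetween (fun _ => (0:ℝ)) g (Ioo 0 1), ENNReal.ofReal (Φ p)) ≤
        ENNReal.ofReal (Φ p0) * volume (regionBetween (fun _ => (0:ℝ)) g (Ioo 0 1)) := by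
      rw [← setLIntegral_const]
      exact setLIntegral_mono' hΩmeas fun p hp =>
        ENNReal.ofReal_le_ofReal (hp0 (hΩsub hp))
    have hvol : volume (regionBetween (fun _ => (0:ℝ)) g (Ioo 0 1)) < ⊤ :=
      lt_of_le_of_lt (measure_mono hΩsub) hcomp.measure_lt_top
    exact ne_top_of_le_ne_top (ENNReal.mul_lt_top ENNReal.ofReal_lt_top hvol).ne hbd
  have hA : A ≠ ⊤ := finbound F hFc
  have hB : B ≠ ⊤ := finbound G hGc
  -- convert to Bochner integrals
  have eθ : (∫ p in regionBetween lo g (Ioo (0:ℝ) 1), F p) = L.toReal :=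
    integral_eq_lintegral_of_nonneg_ae (Filter.Eventually.of_forall fun p => sq_nonneg _)
      hFc.aestronglyMeasurable
  have eA : (∫ p in regionBetween (fun _ => (0:ℝ)) g (Ioo (0:ℝ) 1), F p) = A.toReal :=
    integral_eq_lintegral_of_nonneg_ae (Filter.Eventually.of_forall fun p => sq_nonneg _)
      hFc.aestronglyMeasurable
  have eB : (∫ p in regionBetween (fun _ => (0:ℝ)) g (Ioo (0:ℝ) 1), G p) = B.toReal :=
    integral_eq_lintegral_of_nonneg_ae (Filter.Eventually.of_forall fun p => sq_nonneg _)
      hGc.aestronglyMeasurable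
  -- final real computation
  have hLreal : L.toReal ≤ (ε * h₁) * (K * (A.toReal + B.toReal)) := by
    have := ENNReal.toReal_mono (by
      exact ENNReal.mul_ne_top ENNReal.ofReal_ne_top
        (ENNReal.mul_ne_top ENNReal.ofReal_ne_top (ENNReal.add_ne_top.2 ⟨hA, hB⟩))) chain
    rwa [ENNReal.toReal_mul, ENNReal.toReal_mul, ENNReal.toReal_ofReal
      (by positivity : (0:ℝ) ≤ ε * h₁), ENNReal.toReal_ofReal hK0.le,
      ENNReal.toReal_add hA hB] at this
  have hABnn : 0 ≤ A.toReal + B.toReal := add_nonneg ENNReal.toReal_nonneg ENNReal.toReal_nonneg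
  have final : (1/ε) * (∫ p in regionBetween lo g (Ioo (0:ℝ) 1), F p) ≤
      (K * h₁ + 1) * ((∫ p in regionBetween (fun _ => (0:ℝ)) g (Ioo (0:ℝ) 1), F p) +
        ∫ p in regionBetween (fun _ => (0:ℝ)) g (Ioo (0:ℝ) 1), G p) := by
    rw [eθ, eA, eB]
    have h1 : (1/ε) * L.toReal ≤ (1/ε) * ((ε * h₁) * (K * (A.toReal + B.toReal))) :=
      mul_le_mul_of_nonneg_left hLreal (by positivity)
    have h2 : (1/ε) * ((ε * h₁) * (K * (A.toReal + B.toReal)))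
        = (K * h₁) * (A.toReal + B.toReal) := by
      field_simp
    have h3 : (K * h₁) * (A.toReal + B.toReal) ≤ (K * h₁ + 1) * (A.toReal + B.toReal) := by
      apply mul_le_mul_of_nonneg_right _ hABnn
      linarith
    linarith
  exact final
end

section
/- Let β > 0, let h : ℝ → ℝ be measurable, L_h-periodic with 0 ≤ h(x) ≤ h₁, and let g : (0,1) → ℝ be measurable with 0 < g₀ ≤ g(x) ≤ g₁. For ε > 0 with ε h₁ ≤ g₀, set θ_ε = {(x₁,x₂) : 0 < x₁ < 1, g(x₁) − ε h(x₁/ε^β) < x₂ < g(x₁)}. Then for every w ∈ L¹(0,1), (1/ε) ∫_{θ_ε} w(x₁) d(x₁,x₂) = ∫₀¹ h(x₁/ε^β) w(x₁) dx₁ → μ_h ∫₀¹ w(x₁) dx₁ as ε → 0⁺, where μ_h = (1/L_h)∫₀^{L_h} h(s) ds. -/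
open MeasureTheory Filter Set

private lemma osc_bound {c : ℝ} (φ f : ℝ → ℝ) (hφm : Measurable φ)
    (hφ : ∀ x, |φ x| ≤ c) (hf : IntegrableOn f (Ioo 0 1)) :
    |∫ x in Ioo (0:ℝ) 1, φ x * f x| ≤ c * ∫ x in Ioo (0:ℝ) 1, |f x| := by
  have hint : IntegrableOn (fun x => φ x * f x) (Ioo 0 1) :=
    hf.bdd_mul hφm.aestronglyMeasurable (ae_of_all _ fun x => by simpa using hφ x)
  calc |∫ x in Ioo (0:ℝ) 1, φ x * f x| ≤ ∫ x in Ioo (0:ℝ) 1, |φ x| * |f x| := by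
        simpa [Real.norm_eq_abs, abs_mul] using
          norm_integral_le_integral_norm (μ := volume.restrict (Ioo 0 1)) fun x => φ x * f x
    _ ≤ ∫ x in Ioo (0:ℝ) 1, c * |f x| := by
        apply integral_mono (hint.abs.congr (ae_of_all _ fun x => abs_mul _ _))
          (hf.abs.const_mul c)
        intro x
        exact mul_le_mul_of_nonneg_right (hφ x) (abs_nonneg _)
    _ = c * ∫ x in Ioo (0:ℝ) 1, |f x| := integral_const_mul c _

private lemma periodic_weak_zero (Lh c : ℝ) (hLh : 0 < Lh) (h₀ : ℝ → ℝ)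
    (hm : Measurable h₀) (hb : ∀ x, |h₀ x| ≤ c)
    (hper : Function.Periodic h₀ Lh) (hzero : ∫ x in (0:ℝ)..Lh, h₀ x = 0)
    (w : ℝ → ℝ) (hw : IntegrableOn w (Ioo 0 1)) :
    Tendsto (fun δ : ℝ => ∫ x in Ioo (0:ℝ) 1, h₀ (x / δ) * w x)
      (nhdsWithin 0 (Ioi 0)) (nhds 0) := by
  have hc : 0 ≤ c := le_trans (abs_nonneg _) (hb 0)
  have hφm : ∀ δ : ℝ, Measurable fun x : ℝ => h₀ (x / δ) :=
    fun δ => hm.comp (measurable_id.div_const δ)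
  have hint : ∀ a b : ℝ, IntervalIntegrable h₀ volume a b := by
    intro a b
    rw [intervalIntegrable_iff]
    haveI : IsFiniteMeasure (volume.restrict (Set.uIoc a b)) :=
      ⟨by rw [Measure.restrict_apply_univ]; exact measure_Ioc_lt_top⟩
    exact Integrable.mono' (integrable_const c) hm.aestronglyMeasurable.restrict
      (ae_of_all _ fun x => by simpa using hb x)
  set H : ℝ → ℝ := fun t => ∫ x in (0:ℝ)..t, h₀ x with hH
  have Hper : Function.Periodic H Lh := by
    intro t
    have h1 : H t + ∫ x in t..(t + Lh), h₀ x = H (t + Lh) :=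
      intervalIntegral.integral_add_adjacent_intervals (hint 0 t) (hint t (t + Lh))
    have h2 : ∫ x in t..(t + Lh), h₀ x = ∫ x in (0:ℝ)..(0 + Lh), h₀ x :=
      hper.intervalIntegral_add_eq t 0
    rw [zero_add] at h2
    rw [h2, hzero, add_zero] at h1
    exact h1.symm
  have HB : ∀ t, |H t| ≤ c * Lh := by
    intro t
    obtain ⟨y, hy, hty⟩ := Hper.exists_mem_Ico₀ hLh t
    rw [hty]
    have h1 : ‖∫ x in (0:ℝ)..y, h₀ x‖ ≤ c * |y - 0| :=
      intervalIntegral.norm_integral_le_of_norm_le_const fun x _ => by simpa using hb x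
    simp only [Real.norm_eq_abs, sub_zero] at h1
    calc |H y| ≤ c * |y| := h1
      _ ≤ c * Lh := by
          apply mul_le_mul_of_nonneg_left _ hc
          rw [abs_of_nonneg hy.1]; exact hy.2.le
  have key : ∀ a b : ℝ, Tendsto (fun δ : ℝ => ∫ x in a..b, h₀ (x / δ))
      (nhdsWithin 0 (Ioi 0)) (nhds 0) := by
    intro a b
    have h4 : Tendsto (fun δ : ℝ => δ * (2 * (c * Lh))) (nhdsWithin (0:ℝ) (Ioi 0)) (nhds 0) := by
      simpa using (tendsto_id.mono_left nhdsWithin_le_nhds :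
        Tendsto (fun δ : ℝ => δ) (nhdsWithin (0:ℝ) (Ioi 0)) (nhds 0)).mul_const (2 * (c * Lh))
    refine squeeze_zero_norm' ?_ h4
    · filter_upwards [self_mem_nhdsWithin] with δ hδ
      have hδ' : (0:ℝ) < δ := hδ
      have hδ0 : (δ : ℝ) ≠ 0 := ne_of_gt hδ'
      have e1 : ∫ x in a..b, h₀ (x / δ) = δ • ∫ x in a / δ..b / δ, h₀ x :=
        intervalIntegral.integral_comp_div h₀ hδ0
      have e2 : ∫ x in a / δ..b / δ, h₀ x = H (b / δ) - H (a / δ) :=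
        (intervalIntegral.integral_interval_sub_left (hint 0 (b / δ)) (hint 0 (a / δ))).symm
      rw [e1, e2, smul_eq_mul, Real.norm_eq_abs, abs_mul, abs_of_pos hδ']
      have h3 : |H (b / δ) - H (a / δ)| ≤ 2 * (c * Lh) := by
        calc |H (b / δ) - H (a / δ)| ≤ |H (b / δ)| + |H (a / δ)| := abs_sub _ _
          _ ≤ c * Lh + c * Lh := add_le_add (HB _) (HB _)
          _ = 2 * (c * Lh) := by ring
      exact mul_le_mul_of_nonneg_left h3 hδ'.le
  have intOn : ∀ (δ : ℝ) (f : ℝ → ℝ), IntegrableOn f (Ioo 0 1) →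
      IntegrableOn (fun x => h₀ (x / δ) * f x) (Ioo 0 1) :=
    fun δ f hf => hf.bdd_mul (hφm δ).aestronglyMeasurable (ae_of_all _ fun x => by simpa using hb _)
  have step2 : ∀ v : ℝ → ℝ, Continuous v → HasCompactSupport v →
      Tendsto (fun δ : ℝ => ∫ x in Ioo (0:ℝ) 1, h₀ (x / δ) * v x)
        (nhdsWithin 0 (Ioi 0)) (nhds 0) := by
    intro v hv hvs
    rw [NormedAddCommGroup.tendsto_nhds_zero]
    intro ε hε
    obtain ⟨C, hC⟩ := hv.bounded_above_of_compact_support hvs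
    set ε' := ε / (2 * (c + 1)) with hε'def
    have hε' : 0 < ε' := by positivity
    have hcε' : c * ε' < ε / 2 := by
      rw [hε'def]
      have hmul : ε / (2 * (c + 1)) * (2 * (c + 1)) = ε :=
        div_mul_cancel₀ _ (by positivity)
      nlinarith [hε', hc]
    obtain ⟨η, hη, hmod⟩ := Metric.uniformContinuous_iff.mp
      (hvs.uniformContinuous_of_continuous hv) ε' hε'
    obtain ⟨n, hn⟩ := exists_nat_one_div_lt hη
    set m : ℕ := n + 1 with hmdef
    have hm : (0:ℝ) < m := by positivity
    have hm' : (1:ℝ) / m < η := by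
      rw [hmdef]; push_cast; exact hn
    set u : ℝ → ℝ := fun x => v ((⌊x * m⌋ : ℝ) / m) with hu
    have hum : Measurable u := by
      have hfl : Measurable fun x : ℝ => ((⌊x * (m:ℝ)⌋ : ℤ) : ℝ) :=
        measurable_from_top.comp ((measurable_id.mul_const (m:ℝ)).floor)
      exact hv.measurable.comp (hfl.div_const _)
    have hu_close : ∀ x, |v x - u x| ≤ ε' := by
      intro x
      have h1 : (⌊x * m⌋ : ℝ) ≤ x * m := Int.floor_le _
      have h2 : x * m < ⌊x * m⌋ + 1 := Int.lt_floor_add_one _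
      have hd : dist x ((⌊x * m⌋ : ℝ) / m) < η := by
        rw [Real.dist_eq, abs_of_nonneg (by rw [sub_nonneg, div_le_iff₀ hm]; exact h1)]
        calc x - (⌊x * m⌋ : ℝ) / m < 1 / m := by
              rw [sub_lt_iff_lt_add, ← add_div, lt_div_iff₀ hm]
              linarith
          _ < η := hm'
      exact le_of_lt (by simpa [Real.dist_eq, hu] using hmod hd)
    have hu_bd : ∀ x, |u x| ≤ C := fun x => by simpa using hC _
    have huint : IntegrableOn u (Ioo 0 1) :=
      Integrable.mono' (integrable_const C) hum.aestronglyMeasurable.restrict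
        (ae_of_all _ fun x => by simpa using hu_bd x)
    have hvint : IntegrableOn v (Ioo 0 1) :=
      Integrable.mono' (integrable_const C) hv.measurable.aestronglyMeasurable.restrict
        (ae_of_all _ fun x => hC x)
    have husum : Tendsto (fun δ : ℝ => ∫ x in Ioo (0:ℝ) 1, h₀ (x / δ) * u x)
        (nhdsWithin 0 (Ioi 0)) (nhds 0) := by
      have hIco : Ico (0:ℝ) 1 = ⋃ k ∈ Finset.range m, Ico ((k:ℝ)/m) (((k:ℝ)+1)/m) := by
        ext x
        simp only [Finset.mem_range, mem_iUnion, mem_Ico, exists_prop]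
        constructor
        · rintro ⟨hx0, hx1⟩
          have h2 : (0:ℝ) ≤ x * m := mul_nonneg hx0 hm.le
          have h3 : 0 ≤ ⌊x * m⌋ := Int.floor_nonneg.mpr h2
          have h4 : ⌊x * m⌋ < (m : ℤ) := by
            apply Int.floor_lt.mpr
            push_cast
            nlinarith
          have hcast : ((⌊x * m⌋.toNat : ℕ) : ℝ) = (⌊x * m⌋ : ℝ) := by
            exact_mod_cast Int.toNat_of_nonneg h3
          refine ⟨⌊x * m⌋.toNat, by omega, ?_, ?_⟩
          · rw [div_le_iff₀ hm, hcast]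
            exact Int.floor_le _
          · rw [lt_div_iff₀ hm, hcast]
            exact Int.lt_floor_add_one _
        · rintro ⟨k, hk, hkx, hxk⟩
          constructor
          · exact le_trans (by positivity) hkx
          · calc x < ((k:ℝ)+1)/m := hxk
              _ ≤ 1 := by
                  rw [div_le_one hm]
                  exact_mod_cast Nat.succ_le_of_lt hk
      have hdisj : (↑(Finset.range m) : Set ℕ).Pairwise
          (Function.onFun Disjoint fun k : ℕ => Ico ((k:ℝ)/m) (((k:ℝ)+1)/m)) := by
        intro i _ j _ hij
        simp only [Function.onFun]
        rw [Set.Ico_disjoint_Ico]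
        rcases lt_or_gt_of_ne hij with hlt | hlt
        · calc min (((i:ℝ)+1)/m) (((j:ℝ)+1)/m) ≤ ((i:ℝ)+1)/m := min_le_left _ _
            _ ≤ (j:ℝ)/m := by
                have hij' : (i:ℝ) + 1 ≤ (j:ℝ) := by exact_mod_cast hlt
                gcongr
            _ ≤ max ((i:ℝ)/m) ((j:ℝ)/m) := le_max_right _ _
        · calc min (((i:ℝ)+1)/m) (((j:ℝ)+1)/m) ≤ ((j:ℝ)+1)/m := min_le_right _ _
            _ ≤ (i:ℝ)/m := by
                have hij' : (j:ℝ) + 1 ≤ (i:ℝ) := by exact_mod_cast hlt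
                gcongr
            _ ≤ max ((i:ℝ)/m) ((j:ℝ)/m) := le_max_left _ _
      have hpieceint : ∀ (δ : ℝ) (k : ℕ),
          IntegrableOn (fun x => h₀ (x / δ) * u x) (Ico ((k:ℝ)/m) (((k:ℝ)+1)/m)) := by
        intro δ k
        apply Integrable.mono' (integrable_const (c * C))
          ((hφm δ).mul hum).aestronglyMeasurable.restrict
        apply ae_of_all
        intro x
        simp only [Real.norm_eq_abs, Pi.mul_apply, abs_mul]
        exact mul_le_mul (hb _) (hu_bd x) (abs_nonneg _) hc
      have hpart : ∀ δ : ℝ, ∫ x in Ioo (0:ℝ) 1, h₀ (x / δ) * u x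
          = ∑ k ∈ Finset.range m,
              (∫ x in ((k:ℝ)/m)..(((k:ℝ)+1)/m), h₀ (x / δ)) * v ((k:ℝ)/m) := by
        intro δ
        rw [← integral_Ico_eq_integral_Ioo, hIco,
          integral_biUnion_finset (Finset.range m) (fun k _ => measurableSet_Ico) hdisj
            (fun k _ => hpieceint δ k)]
        apply Finset.sum_congr rfl
        intro k _
        have hkk : ((k:ℝ)/m) ≤ ((k:ℝ)+1)/m := by
          have : (k:ℝ) ≤ (k:ℝ) + 1 := by linarith
          gcongr
        have heq : ∀ x ∈ Ico ((k:ℝ)/m) (((k:ℝ)+1)/m),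
            h₀ (x / δ) * u x = h₀ (x / δ) * v ((k:ℝ)/m) := by
          intro x hx
          have h1 : (k:ℝ) ≤ x * m := (div_le_iff₀ hm).mp hx.1
          have h2 : x * m < (k:ℝ) + 1 := (lt_div_iff₀ hm).mp hx.2
          have hfl : ⌊x * (m:ℝ)⌋ = (k : ℤ) := by
            rw [Int.floor_eq_iff]
            constructor
            · exact_mod_cast h1
            · exact_mod_cast h2
          simp [hu, hfl]
        rw [setIntegral_congr_fun measurableSet_Ico heq, integral_mul_const,
          integral_Ico_eq_integral_Ioo, ← integral_Ioc_eq_integral_Ioo,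
          ← intervalIntegral.integral_of_le hkk]
      simp only [hpart]
      have hsum : Tendsto (fun δ : ℝ => ∑ k ∈ Finset.range m,
          (∫ x in ((k:ℝ)/m)..(((k:ℝ)+1)/m), h₀ (x / δ)) * v ((k:ℝ)/m))
          (nhdsWithin 0 (Ioi 0)) (nhds (∑ k ∈ Finset.range m, 0)) :=
        tendsto_finset_sum _ fun k _ => by simpa using (key ((k:ℝ)/m) (((k:ℝ)+1)/m)).mul_const _
      simpa using hsum
    have hvu : IntegrableOn (fun x => v x - u x) (Ioo 0 1) := hvint.sub huint
    have h2 := NormedAddCommGroup.tendsto_nhds_zero.mp husum (ε/2) (by positivity)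
    filter_upwards [h2] with δ hδ
    have hsplit : (fun x => h₀ (x / δ) * v x)
        = fun x => h₀ (x / δ) * u x + h₀ (x / δ) * (v x - u x) := by
      funext x; ring
    have hscnd : |∫ x in Ioo (0:ℝ) 1, h₀ (x / δ) * (v x - u x)| ≤ c * ε' := by
      refine le_trans (osc_bound _ _ (hφm δ) (fun x => hb _) hvu) ?_
      apply mul_le_mul_of_nonneg_left _ hc
      calc ∫ x in Ioo (0:ℝ) 1, |v x - u x| ≤ ∫ _x in Ioo (0:ℝ) 1, ε' :=
            integral_mono hvu.abs (integrable_const _) fun x => hu_close x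
        _ = ε' := by simp [Real.volume_Ioo]
    rw [Real.norm_eq_abs]
    calc |∫ x in Ioo (0:ℝ) 1, h₀ (x / δ) * v x|
        = |(∫ x in Ioo (0:ℝ) 1, h₀ (x / δ) * u x)
            + ∫ x in Ioo (0:ℝ) 1, h₀ (x / δ) * (v x - u x)| := by
          rw [hsplit, integral_add (intOn δ u huint) (intOn δ _ hvu)]
      _ ≤ |∫ x in Ioo (0:ℝ) 1, h₀ (x / δ) * u x|
            + |∫ x in Ioo (0:ℝ) 1, h₀ (x / δ) * (v x - u x)| := abs_add_le _ _
      _ < ε/2 + c * ε' := add_lt_add_of_lt_of_le (by simpa [Real.norm_eq_abs] using hδ) hscnd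
      _ < ε := by linarith
  rw [NormedAddCommGroup.tendsto_nhds_zero]
  intro ε hε
  set ε' := ε / (2 * (c + 1)) with hε'def
  have hε' : 0 < ε' := by positivity
  have hcε' : c * ε' < ε / 2 := by
    rw [hε'def]
    have hmul : ε / (2 * (c + 1)) * (2 * (c + 1)) = ε :=
      div_mul_cancel₀ _ (by positivity)
    nlinarith [hε', hc]
  have hwind : Integrable ((Ioo (0:ℝ) 1).indicator w) volume :=
    (integrable_indicator_iff measurableSet_Ioo).mpr hw
  obtain ⟨v, hvs, hvdist, hv, hvint⟩ := hwind.exists_hasCompactSupport_integral_sub_le hε'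
  have hvIoo : IntegrableOn v (Ioo 0 1) := hvint.integrableOn
  have hwv : ∫ x in Ioo (0:ℝ) 1, |w x - v x| ≤ ε' := by
    calc ∫ x in Ioo (0:ℝ) 1, |w x - v x|
        = ∫ x in Ioo (0:ℝ) 1, ‖(Ioo (0:ℝ) 1).indicator w x - v x‖ := by
          apply setIntegral_congr_fun measurableSet_Ioo
          intro x hx
          simp [indicator_of_mem hx]
      _ ≤ ∫ x, ‖(Ioo (0:ℝ) 1).indicator w x - v x‖ :=
          setIntegral_le_integral (hwind.sub hvint).norm (ae_of_all _ fun x => norm_nonneg _)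
      _ ≤ ε' := hvdist
  have hwvint : IntegrableOn (fun x => w x - v x) (Ioo 0 1) := hw.sub hvIoo
  have h2 := NormedAddCommGroup.tendsto_nhds_zero.mp (step2 v hv hvs) (ε/2) (by positivity)
  filter_upwards [h2] with δ hδ
  have hsplit : (fun x => h₀ (x / δ) * w x)
      = fun x => h₀ (x / δ) * v x + h₀ (x / δ) * (w x - v x) := by
    funext x; ring
  have hscnd : |∫ x in Ioo (0:ℝ) 1, h₀ (x / δ) * (w x - v x)| ≤ c * ε' :=
    le_trans (osc_bound _ _ (hφm δ) (fun x => hb _) hwvint)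
      (mul_le_mul_of_nonneg_left hwv hc)
  rw [Real.norm_eq_abs]
  calc |∫ x in Ioo (0:ℝ) 1, h₀ (x / δ) * w x|
      = |(∫ x in Ioo (0:ℝ) 1, h₀ (x / δ) * v x)
          + ∫ x in Ioo (0:ℝ) 1, h₀ (x / δ) * (w x - v x)| := by
        rw [hsplit, integral_add (intOn δ v hvIoo) (intOn δ _ hwvint)]
    _ ≤ |∫ x in Ioo (0:ℝ) 1, h₀ (x / δ) * v x|
          + |∫ x in Ioo (0:ℝ) 1, h₀ (x / δ) * (w x - v x)| := abs_add_le _ _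
    _ < ε/2 + c * ε' := add_lt_add_of_lt_of_le (by simpa [Real.norm_eq_abs] using hδ) hscnd
    _ < ε := by linarith

private lemma strip_fubini (ε h₁ g₀ g₁ : ℝ) (hε : 0 < ε) (hg₀ : 0 < g₀) (hεh : ε * h₁ ≤ g₀)
    (a : ℝ → ℝ) (ham : Measurable a) (ha0 : ∀ x, 0 ≤ a x) (ha1 : ∀ x, a x ≤ h₁)
    (g : ℝ → ℝ) (hg_meas : Measurable g)
    (hg_bd : ∀ x ∈ Ioo (0 : ℝ) 1, g₀ ≤ g x ∧ g x ≤ g₁)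
    (w : ℝ → ℝ) (hw : IntegrableOn w (Ioo 0 1)) :
    (1 / ε) * ∫ p in {q : ℝ × ℝ | q.1 ∈ Ioo (0 : ℝ) 1 ∧
        q.2 ∈ Ioo (g q.1 - ε * a q.1) (g q.1)}, w p.1
      = ∫ x in Ioo (0 : ℝ) 1, a x * w x := by
  set S : Set (ℝ × ℝ) := {q : ℝ × ℝ | q.1 ∈ Ioo (0 : ℝ) 1 ∧
      q.2 ∈ Ioo (g q.1 - ε * a q.1) (g q.1)} with hSdef
  have hS_meas : MeasurableSet S := by
    have h1 : S = ((fun q : ℝ × ℝ => q.1) ⁻¹' Ioo 0 1)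
        ∩ ({q : ℝ × ℝ | g q.1 - ε * a q.1 < q.2} ∩ {q : ℝ × ℝ | q.2 < g q.1}) := by
      ext q
      simp only [hSdef, mem_setOf_eq, mem_inter_iff, mem_preimage, mem_Ioo]
    rw [h1]
    refine (measurable_fst measurableSet_Ioo).inter (MeasurableSet.inter ?_ ?_)
    · exact measurableSet_lt
        ((hg_meas.comp measurable_fst).sub ((ham.comp measurable_fst).const_mul ε))
        measurable_snd
    · exact measurableSet_lt measurable_snd (hg_meas.comp measurable_fst)
  -- replace w by a measurable representative
  obtain ⟨w', hw'sm, hww'⟩ : ∃ w' : ℝ → ℝ, StronglyMeasurable w' ∧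
      w =ᵐ[volume.restrict (Ioo 0 1)] w' :=
    ⟨hw.aestronglyMeasurable.mk w, hw.aestronglyMeasurable.stronglyMeasurable_mk,
      hw.aestronglyMeasurable.ae_eq_mk⟩
  have hw'meas : Measurable w' := hw'sm.measurable
  have hw'int : IntegrableOn w' (Ioo 0 1) := hw.congr hww'
  obtain ⟨B, hBsub, hBm, hB0⟩ := exists_measurable_superset_of_null (ae_iff.mp hww')
  have hB0' : volume (B ∩ Ioo (0:ℝ) 1) = 0 := by
    rwa [Measure.restrict_apply hBm] at hB0
  have hsub : S ⊆ Ioo (0:ℝ) 1 ×ˢ Ioo (0:ℝ) g₁ := by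
    rintro ⟨x, y⟩ ⟨hx, hy⟩
    refine ⟨hx, ?_, ?_⟩
    · have h1 : ε * a x ≤ ε * h₁ := mul_le_mul_of_nonneg_left (ha1 x) hε.le
      have h2 : g₀ ≤ g x := (hg_bd x hx).1
      calc (0:ℝ) ≤ g x - ε * a x := by linarith
        _ < y := hy.1
    · exact lt_of_lt_of_le hy.2 (hg_bd x hx).2
  -- a.e. equality on S
  have hae : (fun p : ℝ × ℝ => w p.1) =ᵐ[volume.restrict S] fun p : ℝ × ℝ => w' p.1 := by
    rw [EventuallyEq, ae_iff, Measure.restrict_apply' hS_meas]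
    apply le_antisymm _ zero_le
    calc volume ({p : ℝ × ℝ | ¬ w p.1 = w' p.1} ∩ S)
        ≤ volume ((B ∩ Ioo (0:ℝ) 1) ×ˢ (univ : Set ℝ)) := by
          apply measure_mono
          rintro ⟨x, y⟩ ⟨hp1, hp2⟩
          exact ⟨⟨hBsub hp1, hp2.1⟩, mem_univ y⟩
      _ = 0 := by
          rw [Measure.volume_eq_prod, Measure.prod_prod, hB0', zero_mul]
  have hprodint : IntegrableOn (fun p : ℝ × ℝ => w' p.1) (Ioo (0:ℝ) 1 ×ˢ Ioo (0:ℝ) g₁) := by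
    rw [IntegrableOn, Measure.volume_eq_prod, ← Measure.prod_restrict]
    have hFm : AEStronglyMeasurable (fun p : ℝ × ℝ => w' p.1)
        ((volume.restrict (Ioo (0:ℝ) 1)).prod (volume.restrict (Ioo (0:ℝ) g₁))) :=
      (hw'meas.comp measurable_fst).aestronglyMeasurable
    rw [integrable_prod_iff hFm]
    constructor
    · refine ae_of_all _ fun x => ?_
      have hconst : (fun y : ℝ => w' (x, y).1) = fun _ => w' x := rfl
      rw [hconst]
      exact integrable_const _
    · have heq : (fun x => ∫ y, ‖w' x‖ ∂(volume.restrict (Ioo (0:ℝ) g₁)))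
          = fun x => (volume (Ioo (0:ℝ) g₁)).toReal * ‖w' x‖ := by
        funext x
        rw [integral_const, smul_eq_mul, measureReal_restrict_apply_univ, measureReal_def]
      rw [heq]
      exact hw'int.norm.const_mul _
  have hSint : IntegrableOn (fun p : ℝ × ℝ => w' p.1) S := hprodint.mono_set hsub
  have inner_eq : ∀ x : ℝ, (∫ y, S.indicator (fun p : ℝ × ℝ => w' p.1) (x, y))
      = (Ioo (0:ℝ) 1).indicator (fun x => ε * a x * w' x) x := by
    intro x
    by_cases hx : x ∈ Ioo (0:ℝ) 1
    · have hfn : (fun y => S.indicator (fun p : ℝ × ℝ => w' p.1) (x, y))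
          = (Ioo (g x - ε * a x) (g x)).indicator fun _ => w' x := by
        funext y
        by_cases hy : y ∈ Ioo (g x - ε * a x) (g x)
        · rw [indicator_of_mem hy, indicator_of_mem (show (x, y) ∈ S from ⟨hx, hy⟩)]
        · rw [indicator_of_notMem hy,
            indicator_of_notMem (fun hmem : (x, y) ∈ S => hy hmem.2)]
      rw [hfn, indicator_of_mem hx, integral_indicator_const _ measurableSet_Ioo,
        Real.volume_real_Ioo, show g x - (g x - ε * a x) = ε * a x by ring,
        max_eq_left (mul_nonneg hε.le (ha0 x)), smul_eq_mul]
    · rw [indicator_of_notMem hx]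
      have hfn : (fun y => S.indicator (fun p : ℝ × ℝ => w' p.1) (x, y)) = fun _ => (0:ℝ) :=
        funext fun y => indicator_of_notMem (fun hmem : (x, y) ∈ S => hx hmem.1) _
      rw [hfn, integral_zero]
  have calc2 : ∫ p in S, w' p.1 = ∫ x in Ioo (0:ℝ) 1, ε * a x * w' x := by
    rw [← integral_indicator hS_meas, Measure.volume_eq_prod,
      integral_prod _ (by
        rw [← Measure.volume_eq_prod, integrable_indicator_iff hS_meas]
        exact hSint)]
    calc ∫ x, ∫ y, S.indicator (fun p : ℝ × ℝ => w' p.1) (x, y)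
        = ∫ x, (Ioo (0:ℝ) 1).indicator (fun x => ε * a x * w' x) x :=
          integral_congr_ae (ae_of_all _ inner_eq)
      _ = ∫ x in Ioo (0:ℝ) 1, ε * a x * w' x := integral_indicator measurableSet_Ioo
  have calc3 : ∫ x in Ioo (0:ℝ) 1, ε * a x * w' x = ε * ∫ x in Ioo (0:ℝ) 1, a x * w' x := by
    simp_rw [mul_assoc]
    exact integral_const_mul ε _
  have calc4 : ∫ x in Ioo (0:ℝ) 1, a x * w' x = ∫ x in Ioo (0:ℝ) 1, a x * w x :=
    integral_congr_ae ((hww'.symm).mono fun x hx => by simp only [hx])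
  rw [show (∫ p in S, w p.1) = ∫ p in S, w' p.1 from integral_congr_ae hae,
    calc2, calc3, calc4]
  field_simp

/-- Let `β > 0`, `h` be measurable, `L_h`-periodic with `0 ≤ h ≤ h₁`,
and `g` measurable with `0 < g₀ ≤ g ≤ g₁` on `(0,1)`. For `ε > 0` with `ε h₁ ≤ g₀`, let
`θ_ε = {(x₁,x₂) : 0 < x₁ < 1, g x₁ - ε h (x₁/ε^β) < x₂ < g x₁}`. Then for every
`w ∈ L¹(0,1)`, `(1/ε) ∫_{θ_ε} w x₁ = ∫₀¹ h (x₁/ε^β) w x₁ dx₁ → μ_h ∫₀¹ w x₁ dx₁`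
as `ε → 0⁺`, where `μ_h = (1/L_h) ∫₀^{L_h} h`. -/
theorem concentrating_strip_average (β Lh h₁ g₀ g₁ : ℝ) (hβ : 0 < β) (hLh : 0 < Lh)
    (h : ℝ → ℝ) (hh_meas : Measurable h) (hh_per : ∀ x, h (x + Lh) = h x)
    (hh_bd : ∀ x, 0 ≤ h x ∧ h x ≤ h₁)
    (g : ℝ → ℝ) (hg_meas : Measurable g) (hg₀ : 0 < g₀)
    (hg_bd : ∀ x ∈ Ioo (0 : ℝ) 1, g₀ ≤ g x ∧ g x ≤ g₁)
    (w : ℝ → ℝ) (hw : IntegrableOn w (Ioo 0 1)) :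
    (∀ ε : ℝ, 0 < ε → ε * h₁ ≤ g₀ →
      (1 / ε) * ∫ p in {q : ℝ × ℝ | q.1 ∈ Ioo (0 : ℝ) 1 ∧
          q.2 ∈ Ioo (g q.1 - ε * h (q.1 / ε ^ β)) (g q.1)}, w p.1
        = ∫ x in Ioo (0 : ℝ) 1, h (x / ε ^ β) * w x) ∧
    Tendsto (fun ε : ℝ => ∫ x in Ioo (0 : ℝ) 1, h (x / ε ^ β) * w x)
      (nhdsWithin 0 (Ioi 0))
      (nhds ((Lh⁻¹ * ∫ s in Ioo (0 : ℝ) Lh, h s) * ∫ x in Ioo (0 : ℝ) 1, w x)) := by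
  have h₁0 : 0 ≤ h₁ := le_trans (hh_bd 0).1 (hh_bd 0).2
  constructor
  · intro ε hε hεh
    exact strip_fubini ε h₁ g₀ g₁ hε hg₀ hεh (fun x => h (x / ε ^ β))
      (hh_meas.comp (measurable_id.div_const _)) (fun x => (hh_bd _).1)
      (fun x => (hh_bd _).2) g hg_meas hg_bd w hw
  · set μh : ℝ := Lh⁻¹ * ∫ s in Ioo (0 : ℝ) Lh, h s with hμhdef
    have hintLh : IntegrableOn h (Ioo 0 Lh) :=
      Integrable.mono' (integrable_const h₁) hh_meas.aestronglyMeasurable.restrict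
        (ae_of_all _ fun x => by
          rw [Real.norm_eq_abs, abs_le]
          exact ⟨by linarith [(hh_bd x).1], (hh_bd x).2⟩)
    have hμ0 : 0 ≤ μh := by
      apply mul_nonneg (inv_nonneg.mpr hLh.le)
      exact setIntegral_nonneg measurableSet_Ioo fun x _ => (hh_bd x).1
    have hμ1 : μh ≤ h₁ := by
      have h2 : ∫ s in Ioo (0 : ℝ) Lh, h s ≤ ∫ _s in Ioo (0 : ℝ) Lh, h₁ :=
        integral_mono hintLh (integrable_const _) fun x => (hh_bd x).2
      have h3 : ∫ _s in Ioo (0 : ℝ) Lh, (h₁:ℝ) = h₁ * Lh := by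
        rw [integral_const, smul_eq_mul, measureReal_restrict_apply_univ, Real.volume_real_Ioo,
          max_eq_left (by linarith), sub_zero, mul_comm]
      rw [hμhdef]
      calc Lh⁻¹ * ∫ s in Ioo (0 : ℝ) Lh, h s ≤ Lh⁻¹ * (h₁ * Lh) := by
            apply mul_le_mul_of_nonneg_left _ (inv_nonneg.mpr hLh.le)
            rw [← h3]
            exact h2
        _ = h₁ := by field_simp
    set h₀ : ℝ → ℝ := fun x => h x - μh with hh₀def
    have hm : Measurable h₀ := hh_meas.sub measurable_const
    have hb : ∀ x, |h₀ x| ≤ h₁ := fun x => by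
      have hxeq : h₀ x = h x - μh := rfl
      rw [hxeq, abs_le]
      exact ⟨by linarith [(hh_bd x).1], by linarith [(hh_bd x).2]⟩
    have hper : Function.Periodic h₀ Lh := fun x => by
      simp only [hh₀def, hh_per x]
    have hIIh : IntervalIntegrable h volume 0 Lh := by
      rw [intervalIntegrable_iff, uIoc_of_le hLh.le]
      haveI : IsFiniteMeasure (volume.restrict (Ioc (0:ℝ) Lh)) :=
        ⟨by rw [Measure.restrict_apply_univ]; exact measure_Ioc_lt_top⟩
      exact Integrable.mono' (integrable_const h₁) hh_meas.aestronglyMeasurable.restrict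
        (ae_of_all _ fun x => by
          rw [Real.norm_eq_abs, abs_le]
          exact ⟨by linarith [(hh_bd x).1], (hh_bd x).2⟩)
    have hzero : ∫ x in (0:ℝ)..Lh, h₀ x = 0 := by
      rw [hh₀def]
      rw [intervalIntegral.integral_sub hIIh intervalIntegrable_const]
      rw [intervalIntegral.integral_const, smul_eq_mul, sub_zero]
      rw [intervalIntegral.integral_of_le hLh.le, integral_Ioc_eq_integral_Ioo]
      rw [hμhdef, ← mul_assoc, mul_inv_cancel₀ hLh.ne', one_mul, sub_self]
    have main := periodic_weak_zero Lh h₁ hLh h₀ hm hb hper hzero w hw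
    have hdecomp : ∀ δ : ℝ, ∫ x in Ioo (0:ℝ) 1, h (x / δ) * w x
        = (∫ x in Ioo (0:ℝ) 1, h₀ (x / δ) * w x) + μh * ∫ x in Ioo (0:ℝ) 1, w x := by
      intro δ
      have hsplit : (fun x => h (x / δ) * w x)
          = fun x => h₀ (x / δ) * w x + μh * w x := by
        funext x
        rw [hh₀def]
        ring
      have hint1 : IntegrableOn (fun x => h₀ (x / δ) * w x) (Ioo 0 1) :=
        hw.bdd_mul (hm.comp (measurable_id.div_const δ)).aestronglyMeasurable
          (ae_of_all _ fun x => by simpa using hb _)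
      rw [hsplit, integral_add hint1 (hw.const_mul μh), integral_const_mul]
    have t1 : Tendsto (fun δ : ℝ => ∫ x in Ioo (0:ℝ) 1, h (x / δ) * w x)
        (nhdsWithin 0 (Ioi 0)) (nhds (μh * ∫ x in Ioo (0:ℝ) 1, w x)) := by
      simp only [hdecomp]
      simpa using main.add (tendsto_const_nhds (x := μh * ∫ x in Ioo (0:ℝ) 1, w x))
    have hr : Tendsto (fun ε : ℝ => ε ^ β) (nhdsWithin (0:ℝ) (Ioi 0))
        (nhdsWithin (0:ℝ) (Ioi 0)) := by
      apply tendsto_nhdsWithin_of_tendsto_nhds_of_eventually_within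
      · have hct := (Real.continuousAt_rpow_const 0 β (Or.inr hβ.le)).tendsto
        rw [Real.zero_rpow hβ.ne'] at hct
        exact hct.mono_left nhdsWithin_le_nhds
      · filter_upwards [self_mem_nhdsWithin] with ε hε
        exact Real.rpow_pos_of_pos hε β
    exact t1.comp hr
end
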